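/- arXiv:1903.02810 — 5 statements merged into one kernel-verified Lean document; each statement's English description precedes it below -/
import Mathlib

section
/- In the discrete uncorrelated reduction instance, suppose W is a subset sum, i.e., there exists S ⊆ {1,…,m} with Σ_{i∈S} w_i = W. Then f(W) > f(W + 2ε); in particular, b = W + 2ε is not a maximizer of f over [W, W + 2ε]. Moreover, f(W + 2ε) = −M − W + ε²/M. -/
noncomputable section

/-- Feasibility for the follower's continuous knapsack problem. -/
def feasibleKP {n : ℕ} (a : Fin n → ℝ) (b : ℝ) (x : Fin n → ℝ) : Prop :=
  (∑ i, a i * x i) ≤ b ∧ ∀ i, 0 ≤ x i ∧ x i ≤ 1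

/-- Optimality for the follower's continuous knapsack problem with profits `c`. -/
def optimalKP {n : ℕ} (a c : Fin n → ℝ) (b : ℝ) (x : Fin n → ℝ) : Prop :=
  feasibleKP a b x ∧ ∀ y, feasibleKP a b y → ∑ i, c i * y i ≤ ∑ i, c i * x i

/-- The constant `ε = 1/4` of the reduction instance. -/
def eps : ℝ := 1 / 4

/-- The constant `M = ∑ wᵢ + ε` of the reduction instance. -/
def Mval (m : ℕ) (w : Fin m → ℤ) : ℝ := (∑ i, (w i : ℝ)) + eps

/-- Item sizes `a = (ε, w₁, …, w_m, M)` of the reduction instance. -/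
def avec (m : ℕ) (w : Fin m → ℤ) : Fin (m + 2) → ℝ := fun i =>
  if h0 : (i : ℕ) = 0 then eps
  else if h1 : (i : ℕ) = m + 1 then Mval m w
  else (w ⟨(i : ℕ) - 1, by have := i.isLt; omega⟩ : ℝ)

/-- Leader's item values `d = (−M, −w₁, …, −w_m, ε)` of the reduction instance. -/
def dvec (m : ℕ) (w : Fin m → ℤ) : Fin (m + 2) → ℝ := fun i =>
  if h0 : (i : ℕ) = 0 then -Mval m w
  else if h1 : (i : ℕ) = m + 1 then eps
  else -(w ⟨(i : ℕ) - 1, by have := i.isLt; omega⟩ : ℝ)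

/-- Membership in the discrete uncorrelated uncertainty set
`U = ∏_{i=1}^{n} {i·aᵢ, (n+i)·aᵢ}` (with `n = m + 2` and 1-based indices). -/
def inU (m : ℕ) (w : Fin m → ℤ) (c : Fin (m + 2) → ℝ) : Prop :=
  ∀ i : Fin (m + 2),
    c i = ((i : ℕ) + 1) * avec m w i ∨ c i = ((m + 2) + ((i : ℕ) + 1)) * avec m w i

/-- The leader's objective `f(b) = min_{c ∈ U} min { dᵀx : x optimal for c }`
of the reduction instance (pessimistic view). -/
def fval (m : ℕ) (w : Fin m → ℤ) (b : ℝ) : ℝ :=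
  sInf {v : ℝ | ∃ c x : Fin (m + 2) → ℝ,
    inU m w c ∧ optimalKP (avec m w) c b x ∧ v = ∑ i, dvec m w i * x i}

/-- `V` is a subset sum of `{w₁, …, w_m}`. -/
def isSubsetSum (m : ℕ) (w : Fin m → ℤ) (V : ℝ) : Prop :=
  ∃ S : Finset (Fin m), V = ∑ i ∈ S, (w i : ℝ)


namespace DUhelp

/-- budget tightness at optimum -/
lemma tight {n : ℕ} {a c : Fin n → ℝ} {b : ℝ} {x : Fin n → ℝ}
    (ha : ∀ i, 0 < a i) (hc : ∀ i, 0 < c i) (hb : b < ∑ i, a i)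
    (hopt : optimalKP a c b x) : ∑ i, a i * x i = b := by
  obtain ⟨⟨hfb, hbox⟩, hmax⟩ := hopt
  by_contra hne
  have hlt : ∑ i, a i * x i < b := lt_of_le_of_ne hfb hne
  have hex : ∃ j, x j < 1 := by
    by_contra h
    push_neg at h
    have : ∀ i, x i = 1 := fun i => le_antisymm (hbox i).2 (h i)
    have : ∑ i, a i * x i = ∑ i, a i := by
      apply Finset.sum_congr rfl; intro i _; rw [this i, mul_one]
    linarith
  obtain ⟨j, hj⟩ := hex
  set t : ℝ := min (1 - x j) ((b - ∑ i, a i * x i) / a j) with ht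
  have htpos : 0 < t := lt_min (by linarith) (div_pos (by linarith) (ha j))
  set y : Fin n → ℝ := Function.update x j (x j + t) with hy
  have hyi : ∀ i, y i = x i + (if i = j then t else 0) := by
    intro i
    by_cases h : i = j
    · subst h; simp [hy]
    · simp [hy, h, Function.update_of_ne h]
  have hsum : ∀ g : Fin n → ℝ, ∑ i, g i * y i = (∑ i, g i * x i) + g j * t := by
    intro g
    have : ∀ i, g i * y i = g i * x i + (if i = j then g j * t else 0) := by
      intro i; rw [hyi i]; by_cases h : i = j <;> simp [h] <;> ring
    rw [Finset.sum_congr rfl (fun i _ => this i), Finset.sum_add_distrib,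
      Finset.sum_ite_eq' Finset.univ j (fun _ => g j * t)]
    simp
  have hfy : feasibleKP a b y := by
    constructor
    · rw [hsum a]
      have : t ≤ (b - ∑ i, a i * x i) / a j := min_le_right _ _
      have := (le_div_iff₀ (ha j)).mp this
      linarith [mul_comm (a j) t]
    · intro i
      rw [hyi i]
      by_cases h : i = j
      · subst h; simp
        constructor
        · linarith [(hbox i).1]
        · have : t ≤ 1 - x i := min_le_left _ _
          linarith
      · simp [h]; exact hbox i
  have := hmax y hfy
  rw [hsum c] at this
  nlinarith [mul_pos (hc j) htpos]

/-- exchange argument -/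
lemma exchange {n : ℕ} {a c : Fin n → ℝ} {b : ℝ} {x : Fin n → ℝ}
    (ha : ∀ k, 0 < a k) (hc : ∀ k, 0 < c k)
    (hopt : optimalKP a c b x) {i j : Fin n} (hij : i ≠ j)
    (hr : c i * a j < c j * a i) (hxi : 0 < x i) (hxj : x j < 1) : False := by
  obtain ⟨⟨hfb, hbox⟩, hmax⟩ := hopt
  set d : ℝ := min (a i * x i) (a j * (1 - x j)) with hd
  have hdpos : 0 < d := lt_min (mul_pos (ha i) hxi) (mul_pos (ha j) (by linarith))
  set y : Fin n → ℝ := fun k => if k = i then x i - d / a i else if k = j then x j + d / a j else x k with hy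
  have hyk : ∀ k, y k = x k + (if k = i then -(d / a i) else 0) + (if k = j then d / a j else 0) := by
    intro k
    by_cases h1 : k = i
    · subst h1; simp [hy, hij]; ring
    · by_cases h2 : k = j
      · subst h2; simp [hy, h1]
      · simp [hy, h1, h2]
  have hsum : ∀ g : Fin n → ℝ, ∑ k, g k * y k = (∑ k, g k * x k) - g i * (d / a i) + g j * (d / a j) := by
    intro g
    have : ∀ k, g k * y k = g k * x k + (if k = i then -(g i * (d / a i)) else 0)
        + (if k = j then g j * (d / a j) else 0) := by
      intro k; rw [hyk k]
      by_cases h1 : k = i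
      · subst h1; simp [hij]; ring
      · by_cases h2 : k = j
        · subst h2; simp [h1]; ring
        · simp [h1, h2]
    rw [Finset.sum_congr rfl (fun k _ => this k), Finset.sum_add_distrib, Finset.sum_add_distrib,
      Finset.sum_ite_eq' Finset.univ i, Finset.sum_ite_eq' Finset.univ j]
    simp; ring
  have hfy : feasibleKP a b y := by
    constructor
    · rw [hsum a]
      rw [mul_div_cancel₀ _ (ne_of_gt (ha i)), mul_div_cancel₀ _ (ne_of_gt (ha j))]
      linarith
    · intro k
      rw [hyk k]
      by_cases h1 : k = i
      · subst h1; simp [hij]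
        have h2 : d ≤ a k * x k := min_le_left _ _
        have := (div_le_iff₀ (ha k)).mpr (by linarith [mul_comm (a k) (x k)] : d ≤ x k * a k)
        constructor
        · linarith
        · have := div_nonneg (le_of_lt hdpos) (le_of_lt (ha k))
          linarith [(hbox k).2]
      · by_cases h2 : k = j
        · subst h2; simp [h1]
          have h3 : d ≤ a k * (1 - x k) := min_le_right _ _
          have := (div_le_iff₀ (ha k)).mpr (by linarith [mul_comm (a k) (1 - x k)] : d ≤ (1 - x k) * a k)
          constructor
          · have := div_nonneg (le_of_lt hdpos) (le_of_lt (ha k))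
            linarith [(hbox k).1]
          · linarith
        · simp [h1, h2]; exact hbox k
  have hle := hmax y hfy
  rw [hsum c] at hle
  have : c i * (d / a i) < c j * (d / a j) := by
    rw [mul_div_assoc', mul_div_assoc', div_lt_div_iff₀ (ha i) (ha j)]
    nlinarith
  linarith

/-- sufficient optimality certificate -/
lemma certificate {n : ℕ} {a c : Fin n → ℝ} {b lam : ℝ} {x : Fin n → ℝ}
    (hfeas : feasibleKP a b x) (htight : ∑ i, a i * x i = b) (hlam : 0 ≤ lam)
    (h1 : ∀ i, lam * a i < c i → x i = 1) (h0 : ∀ i, c i < lam * a i → x i = 0) :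
    optimalKP a c b x := by
  refine ⟨hfeas, fun y hy => ?_⟩
  have expand : ∀ i, c i * y i = (c i - lam * a i) * (y i - x i) + c i * x i
      + lam * (a i * y i) - lam * (a i * x i) := fun i => by ring
  have e1 : ∑ i, c i * y i = (∑ i, (c i - lam * a i) * (y i - x i)) + (∑ i, c i * x i)
      + lam * (∑ i, a i * y i) - lam * (∑ i, a i * x i) := by
    rw [Finset.mul_sum, Finset.mul_sum, ← Finset.sum_add_distrib, ← Finset.sum_add_distrib,
      ← Finset.sum_sub_distrib]
    exact Finset.sum_congr rfl (fun i _ => expand i)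
  have e2 : ∑ i, (c i - lam * a i) * (y i - x i) ≤ 0 := by
    apply Finset.sum_nonpos
    intro i _
    rcases lt_trichotomy (c i) (lam * a i) with h | h | h
    · have := h0 i h
      rw [this]
      have := (hy.2 i).1
      nlinarith
    · rw [h]; ring_nf; simp
    · have := h1 i h
      rw [this]
      have := (hy.2 i).2
      nlinarith
  have e3 : lam * (∑ i, a i * y i) ≤ lam * b := mul_le_mul_of_nonneg_left hy.1 hlam
  rw [htight] at e1
  linarith

def i0 (m : ℕ) : Fin (m + 2) := ⟨0, by omega⟩
def iL (m : ℕ) : Fin (m + 2) := ⟨m + 1, by omega⟩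
def mid {m : ℕ} (i : Fin m) : Fin (m + 2) := ⟨(i : ℕ) + 1, by omega⟩

@[simp] lemma i0_val (m : ℕ) : ((i0 m : Fin (m+2)) : ℕ) = 0 := rfl
@[simp] lemma iL_val (m : ℕ) : ((iL m : Fin (m+2)) : ℕ) = m + 1 := rfl
@[simp] lemma mid_val {m : ℕ} (i : Fin m) : ((mid i : Fin (m+2)) : ℕ) = (i : ℕ) + 1 := rfl

lemma mid_ne_i0 {m : ℕ} (i : Fin m) : mid i ≠ i0 m := by
  intro h; have := congrArg (Fin.val) h; simp at this

lemma mid_ne_iL {m : ℕ} (i : Fin m) : mid i ≠ iL m := by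
  intro h; have := congrArg (Fin.val) h; simp at this; omega

lemma i0_ne_iL (m : ℕ) : i0 m ≠ iL m := by
  intro h; have := congrArg (Fin.val) h; simp at this

lemma mid_inj {m : ℕ} {i j : Fin m} (h : mid i = mid j) : i = j := by
  have := congrArg (Fin.val) h; simp at this; exact Fin.ext this

variable {m : ℕ} {w : Fin m → ℤ}

@[simp] lemma avec_i0 : avec m w (i0 m) = eps := by simp [avec, i0]
@[simp] lemma avec_iL : avec m w (iL m) = Mval m w := by simp [avec, iL]
@[simp] lemma avec_mid (i : Fin m) : avec m w (mid i) = (w i : ℝ) := by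
  have h1 : ((mid i : Fin (m+2)) : ℕ) ≠ 0 := by simp
  have h2 : ((mid i : Fin (m+2)) : ℕ) ≠ m + 1 := by simp; omega
  simp only [avec]
  rw [dif_neg h1, dif_neg h2]
  congr 1

@[simp] lemma dvec_i0 : dvec m w (i0 m) = -Mval m w := by simp [dvec, i0]
@[simp] lemma dvec_iL : dvec m w (iL m) = eps := by simp [dvec, iL]
@[simp] lemma dvec_mid (i : Fin m) : dvec m w (mid i) = -(w i : ℝ) := by
  have h1 : ((mid i : Fin (m+2)) : ℕ) ≠ 0 := by simp
  have h2 : ((mid i : Fin (m+2)) : ℕ) ≠ m + 1 := by simp; omega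
  simp only [dvec]
  rw [dif_neg h1, dif_neg h2]
  congr 2

lemma sum_split (f : Fin (m + 2) → ℝ) :
    ∑ j, f j = f (i0 m) + (∑ i : Fin m, f (mid i)) + f (iL m) := by
  rw [Fin.sum_univ_succ, Fin.sum_univ_castSucc]
  have h0 : (0 : Fin (m + 2)) = i0 m := rfl
  have hL : Fin.succ (Fin.last m) = iL m := by
    apply Fin.ext; simp [iL]
  have hm : ∀ i : Fin m, Fin.succ (Fin.castSucc i) = mid i := by
    intro i; apply Fin.ext; simp [mid]
  rw [h0, hL]
  rw [Finset.sum_congr rfl (fun i _ => congrArg f (hm i))]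
  ring

lemma eps_pos : (0:ℝ) < eps := by norm_num [eps]

lemma sumw_pos (hw : ∀ i, 1 ≤ w i) : (0:ℝ) ≤ ∑ i, (w i : ℝ) := by
  apply Finset.sum_nonneg
  intro i _
  have : (0:ℤ) ≤ w i := by linarith [hw i]
  exact_mod_cast this

lemma Mval_pos (hw : ∀ i, 1 ≤ w i) : 0 < Mval m w := by
  have := sumw_pos hw
  simp only [Mval]
  linarith [eps_pos]

lemma avec_pos (hw : ∀ i, 1 ≤ w i) : ∀ i, 0 < avec m w i := by
  intro i
  rcases Nat.lt_or_ge 0 (i : ℕ) with h | h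
  · rcases Nat.lt_or_ge (i : ℕ) (m + 1) with h2 | h2
    · have : ∃ j : Fin m, i = mid j := by
        refine ⟨⟨(i:ℕ) - 1, by omega⟩, ?_⟩
        apply Fin.ext; simp [mid]; omega
      obtain ⟨j, rfl⟩ := this
      rw [avec_mid]
      have : (0:ℤ) < w j := by linarith [hw j]
      exact_mod_cast this
    · have : i = iL m := by
        apply Fin.ext; have := i.isLt; simp [iL]; omega
      rw [this, avec_iL]; exact Mval_pos hw
  · have : i = i0 m := by apply Fin.ext; simp only [i0_val]; omega
    rw [this, avec_i0]; exact eps_pos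

lemma cpos (hw : ∀ i, 1 ≤ w i) {c : Fin (m+2) → ℝ} (hc : inU m w c) : ∀ i, 0 < c i := by
  intro i
  have hai := avec_pos hw i
  rcases hc i with h | h <;> rw [h] <;> apply mul_pos _ hai <;> positivity

end DUhelp
namespace DUhelp

variable {m : ℕ} {w : Fin m → ℤ}

lemma sumw_eq : (∑ i, (w i : ℝ)) = Mval m w - eps := by simp [Mval]

/-- lower bound at budget W from feasibility alone -/
lemma lb1 (hw : ∀ i, 1 ≤ w i) (W : ℤ)
    {x : Fin (m+2) → ℝ} (hfeas : feasibleKP (avec m w) (W:ℝ) x) :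
    -Mval m w - W + eps ≤ ∑ i, dvec m w i * x i := by
  obtain ⟨hfb, hbox⟩ := hfeas
  rw [sum_split (fun j => avec m w j * x j)] at hfb
  simp only [avec_i0, avec_iL, avec_mid] at hfb
  rw [sum_split (fun j => dvec m w j * x j)]
  simp only [dvec_i0, dvec_iL, dvec_mid]
  have hnegsum : (∑ i : Fin m, -(w i:ℝ) * x (mid i)) = -(∑ i : Fin m, (w i:ℝ) * x (mid i)) := by
    rw [← Finset.sum_neg_distrib]
    exact Finset.sum_congr rfl (fun i _ => by ring)
  rw [hnegsum]
  have hM : 0 < Mval m w := Mval_pos hw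
  have hepsM : eps ≤ Mval m w := by
    have := sumw_pos hw; simp only [Mval]; linarith
  have h0 := hbox (i0 m)
  have hL := hbox (iL m)
  have p1 : (Mval m w - eps) * x (i0 m) ≤ Mval m w - eps := by nlinarith [h0.1, h0.2]
  have p2 : 0 ≤ Mval m w * x (iL m) := mul_nonneg (le_of_lt hM) hL.1
  have p3 : 0 ≤ eps * x (iL m) := mul_nonneg (le_of_lt eps_pos) hL.1
  nlinarith

set_option maxHeartbeats 1000000 in
/-- main lower bound at budget W + 2ε -/
lemma lb2 (hw : ∀ i, 1 ≤ w i) (W : ℤ) (hW1 : 1 ≤ W) (hW2 : W ≤ (∑ i, w i) - 1)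
    {c x : Fin (m+2) → ℝ} (hcU : inU m w c)
    (hopt : optimalKP (avec m w) c ((W:ℝ) + 2 * eps) x) :
    -Mval m w - W + eps ^ 2 / Mval m w ≤ ∑ i, dvec m w i * x i := by
  classical
  have ha := avec_pos (w := w) hw
  have hcpos : ∀ i, 0 < c i := cpos hw hcU
  have hMpos : 0 < Mval m w := Mval_pos hw
  have hW1r : (1:ℝ) ≤ (W:ℝ) := by exact_mod_cast hW1
  have hW2r : (W:ℝ) ≤ (∑ i, (w i:ℝ)) - 1 := by
    have : ((W:ℤ):ℝ) ≤ (((∑ i, w i) - 1 : ℤ) : ℝ) := by exact_mod_cast hW2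
    push_cast at this
    linarith
  have hsw : (2:ℝ) ≤ ∑ i, (w i : ℝ) := by linarith
  have hM2 : 2 + eps ≤ Mval m w := by simp only [Mval]; linarith
  have hWub : (W:ℝ) ≤ Mval m w - eps - 1 := by
    rw [sumw_eq] at hW2r; linarith
  have heps1 : eps < 1 := by norm_num [eps]
  have h2e : 2 * eps < 1 := by norm_num [eps]
  have hbM : (W:ℝ) + 2 * eps < Mval m w := by linarith
  have hbsum : (W:ℝ) + 2 * eps < ∑ i, avec m w i := by
    rw [sum_split (fun j => avec m w j)]
    simp only [avec_i0, avec_iL, avec_mid]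
    rw [sumw_eq]
    linarith
  have htt := tight ha hcpos hbsum hopt
  rw [sum_split (fun j => avec m w j * x j)] at htt
  simp only [avec_i0, avec_iL, avec_mid] at htt
  rw [sum_split (fun j => dvec m w j * x j)]
  simp only [dvec_i0, dvec_iL, dvec_mid]
  have hnegsum : (∑ i : Fin m, -(w i:ℝ) * x (mid i)) = -(∑ i : Fin m, (w i:ℝ) * x (mid i)) := by
    rw [← Finset.sum_neg_distrib]
    exact Finset.sum_congr rfl (fun i _ => by ring)
  rw [hnegsum]
  set M := Mval m w with hMdef
  set Sw := ∑ i : Fin m, (w i:ℝ) * x (mid i) with hSwdef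
  set x0 := x (i0 m) with hx0def
  set xL := x (iL m) with hxLdef
  -- htt : eps * x0 + Sw + M * xL = W + 2 * eps
  have hbox := hopt.1.2
  have h00 : 0 ≤ x0 := (hbox (i0 m)).1
  have h01 : x0 ≤ 1 := (hbox (i0 m)).2
  have hL0 : 0 ≤ xL := (hbox (iL m)).1
  have hL1' : xL ≤ 1 := (hbox (iL m)).2
  have hSwnn : 0 ≤ Sw := by
    apply Finset.sum_nonneg
    intro i _
    apply mul_nonneg _ (hbox (mid i)).1
    have : (0:ℤ) ≤ w i := by linarith [hw i]
    exact_mod_cast this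
  have hd : eps ^ 2 / M ≤ eps := by
    rw [div_le_iff₀ hMpos]
    nlinarith [eps_pos]
  -- goal : -M - W + eps^2/M ≤ -M * x0 + -Sw + eps * xL
  -- generic conclusion when x0 = 0
  have final0 : x0 = 0 → -M - (W:ℝ) + eps ^ 2 / M ≤ -M * x0 + -Sw + eps * xL := by
    intro h
    rw [h] at htt ⊢
    have p3 : 0 ≤ eps * xL := mul_nonneg (le_of_lt eps_pos) hL0
    have p2 : 0 ≤ M * xL := mul_nonneg (le_of_lt hMpos) hL0
    linarith [hd, hM2, heps1, eps_pos]
  -- coefficient bound for all indices other than i0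
  have hcoe2 : ∀ j, j ≠ i0 m → 2 * avec m w j ≤ c j := by
    intro j hj
    have hj1 : 1 ≤ (j:ℕ) := by
      rcases Nat.eq_zero_or_pos (j:ℕ) with h | h
      · exact absurd (Fin.ext (h.trans (i0_val m).symm)) hj
      · exact h
    have hj1r : (1:ℝ) ≤ ((j:ℕ):ℝ) := by exact_mod_cast hj1
    have hmr : (0:ℝ) ≤ (m:ℝ) := Nat.cast_nonneg m
    rcases hcU j with h | h <;> rw [h] <;> nlinarith [ha j]
  rcases hcU (i0 m) with hc0 | hc0
  · -- Case A : c at i0 is low, ratio 1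
    have hx0z : x0 = 0 := by
      by_contra h
      have hx0pos : 0 < x0 := lt_of_le_of_ne h00 (Ne.symm h)
      have hall1 : ∀ j, j ≠ i0 m → x j = 1 := by
        intro j hj
        by_contra hlt
        have hlt' : x j < 1 := lt_of_le_of_ne (hbox j).2 hlt
        refine exchange ha hcpos hopt (Ne.symm hj) ?_ hx0pos hlt'
        rw [hc0]
        simp only [i0_val, Nat.cast_zero]
        nlinarith [ha (i0 m), ha j, hcoe2 j hj, mul_pos (ha (i0 m)) (ha j),
          mul_le_mul_of_nonneg_right (hcoe2 j hj) (le_of_lt (ha (i0 m)))]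
      have hmid1 : Sw = M - eps := by
        rw [hSwdef, ← sumw_eq]
        apply Finset.sum_congr rfl
        intro i _
        rw [hall1 (mid i) (mid_ne_i0 i), mul_one]
      have hL1 : xL = 1 := hall1 (iL m) (Ne.symm (i0_ne_iL m))
      rw [hmid1, hL1] at htt
      have : 0 ≤ eps * x0 := mul_nonneg (le_of_lt eps_pos) h00
      linarith [hWub, hM2, eps_pos]
    exact final0 hx0z
  · -- Case B : c at i0 is high, ratio m+3
    rcases hcU (iL m) with hcL | hcL
    · -- B2 comes later; this branch: c at iL low, ratio m+2
      by_cases hxLbig : eps / M ≤ xL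
      · have hkey : (M + eps) * (eps / M) = eps + eps ^ 2 / M := by
          field_simp [hMpos.ne']
        have h1 : (M + eps) * (eps / M) ≤ (M + eps) * xL := by
          apply mul_le_mul_of_nonneg_left hxLbig
          linarith [eps_pos]
        have h2a : 0 ≤ (M - eps) * (1 - x0) :=
          mul_nonneg (by linarith : (0:ℝ) ≤ M - eps) (by linarith : (0:ℝ) ≤ 1 - x0)
        have h2b : (M - eps) * (1 - x0) = (M - eps) - ((M - eps) * x0) := by ring
        have h2 : (M - eps) * x0 ≤ M - eps := by linarith
        have h1' : eps + eps ^ 2 / M ≤ M * xL + eps * xL := by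
          have hexp : (M + eps) * xL = M * xL + eps * xL := by ring
          rw [hkey, hexp] at h1
          exact h1
        linarith [h1', h2, htt]
      · push_neg at hxLbig
        have hxL1 : xL < 1 := by
          apply lt_of_lt_of_le hxLbig
          rw [div_le_one hMpos]
          linarith
        -- low mids are zero
        have hlowz : ∀ i : Fin m,
            c (mid i) = (((mid i : Fin (m+2)) : ℕ) + 1) * avec m w (mid i) → x (mid i) = 0 := by
          intro i hcm
          by_contra h
          have hpos : 0 < x (mid i) := lt_of_le_of_ne (hbox (mid i)).1 (Ne.symm h)
          refine exchange ha hcpos hopt (mid_ne_iL i) ?_ hpos hxL1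
          rw [hcm, hcL]
          simp only [mid_val, iL_val]
          push_cast
          have hir : ((i:ℕ):ℝ) < (m:ℝ) := by exact_mod_cast i.isLt
          nlinarith [ha (mid i), ha (iL m), mul_pos (ha (mid i)) (ha (iL m))]
        -- integrality contradiction tool
        have hint : (∀ i : Fin m, x (mid i) = 1 ∨ x (mid i) = 0) →
            (W:ℝ) < Sw → Sw < (W:ℝ) + 1 → False := by
          intro hm01 h1 h2
          have hSweq : Sw = ((∑ i ∈ Finset.univ.filter (fun i => x (mid i) = 1), w i : ℤ) : ℝ) := by
            rw [hSwdef]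
            push_cast
            rw [Finset.sum_filter]
            apply Finset.sum_congr rfl
            intro i _
            rcases hm01 i with h | h
            · rw [if_pos h, h, mul_one]
            · rw [h, mul_zero, if_neg (by norm_num : ¬(0:ℝ) = 1)]
          rw [hSweq] at h1 h2
          have e1 : W < ∑ i ∈ Finset.univ.filter (fun i => x (mid i) = 1), w i := by exact_mod_cast h1
          have e2 : (∑ i ∈ Finset.univ.filter (fun i => x (mid i) = 1), w i) < W + 1 := by
            exact_mod_cast h2
          omega
        by_cases hxLpos : 0 < xL
        · exfalso
          have hx01 : x0 = 1 := by
            by_contra h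
            have hlt : x0 < 1 := lt_of_le_of_ne h01 h
            refine exchange ha hcpos hopt (Ne.symm (i0_ne_iL m)) ?_ hxLpos hlt
            rw [hcL, hc0]
            simp only [i0_val, iL_val]
            push_cast
            nlinarith [ha (i0 m), ha (iL m), mul_pos (ha (i0 m)) (ha (iL m))]
          have hhigh1 : ∀ i : Fin m,
              c (mid i) = ((m + 2) + (((mid i : Fin (m+2)) : ℕ) + 1)) * avec m w (mid i) →
              x (mid i) = 1 := by
            intro i hcm
            by_contra h
            have hlt : x (mid i) < 1 := lt_of_le_of_ne (hbox (mid i)).2 h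
            refine exchange ha hcpos hopt (Ne.symm (mid_ne_iL i)) ?_ hxLpos hlt
            rw [hcL, hcm]
            simp only [mid_val, iL_val]
            push_cast
            have hir : (0:ℝ) ≤ ((i:ℕ):ℝ) := Nat.cast_nonneg _
            nlinarith [ha (mid i), ha (iL m), mul_pos (ha (mid i)) (ha (iL m))]
          have hm01 : ∀ i : Fin m, x (mid i) = 1 ∨ x (mid i) = 0 := by
            intro i
            rcases hcU (mid i) with h | h
            · exact Or.inr (hlowz i h)
            · exact Or.inl (hhigh1 i h)
          have hMxL : 0 < M * xL := mul_pos hMpos hxLpos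
          have hMxL2 : M * xL < eps := by
            have h := mul_lt_mul_of_pos_left hxLbig hMpos
            rwa [mul_div_cancel₀ _ (ne_of_gt hMpos)] at h
          rw [hx01] at htt
          apply hint hm01
          · linarith [eps_pos]
          · linarith [eps_pos, heps1]
        · have hxL0 : xL = 0 := le_antisymm (not_lt.mp hxLpos) hL0
          by_cases hx0pos : 0 < x0
          · exfalso
            have hhigh1 : ∀ i : Fin m,
                c (mid i) = ((m + 2) + (((mid i : Fin (m+2)) : ℕ) + 1)) * avec m w (mid i) →
                x (mid i) = 1 := by
              intro i hcm
              by_contra h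
              have hlt : x (mid i) < 1 := lt_of_le_of_ne (hbox (mid i)).2 h
              refine exchange ha hcpos hopt (Ne.symm (mid_ne_i0 i)) ?_ hx0pos hlt
              rw [hc0, hcm]
              simp only [mid_val, i0_val]
              push_cast
              have hir : (0:ℝ) ≤ ((i:ℕ):ℝ) := Nat.cast_nonneg _
              nlinarith [ha (mid i), ha (i0 m), mul_pos (ha (mid i)) (ha (i0 m))]
            have hm01 : ∀ i : Fin m, x (mid i) = 1 ∨ x (mid i) = 0 := by
              intro i
              rcases hcU (mid i) with h | h
              · exact Or.inr (hlowz i h)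
              · exact Or.inl (hhigh1 i h)
            have hex0 : 0 < eps * x0 := mul_pos eps_pos hx0pos
            have hex1 : eps * x0 ≤ eps := by
              nlinarith [mul_nonneg (by linarith : (0:ℝ) ≤ 1 - x0) (le_of_lt eps_pos)]
            rw [hxL0] at htt
            apply hint hm01
            · linarith [eps_pos]
            · linarith [eps_pos]
          · exact final0 (le_antisymm (not_lt.mp hx0pos) h00)
    · -- B1 : c at iL is high, ratio 2m+4
      have hx0z : x0 = 0 := by
        by_contra h
        have hx0pos : 0 < x0 := lt_of_le_of_ne h00 (Ne.symm h)
        have hxL1 : xL < 1 := by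
          have hex0 : 0 ≤ eps * x0 := mul_nonneg (le_of_lt eps_pos) h00
          nlinarith [htt, hSwnn, hbM, hMpos]
        refine exchange ha hcpos hopt (i0_ne_iL m) ?_ hx0pos hxL1
        rw [hc0, hcL]
        simp only [i0_val, iL_val]
        push_cast
        have hmr : (0:ℝ) ≤ (m:ℝ) := Nat.cast_nonneg m
        nlinarith [ha (i0 m), ha (iL m), mul_pos (ha (i0 m)) (ha (iL m))]
      exact final0 hx0z

end DUhelp
namespace DUhelp

variable {m : ℕ} {w : Fin m → ℤ}

set_option maxHeartbeats 1000000 in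
/-- upper-bound witness at budget W + 2ε -/
lemma witness (hw : ∀ i, 1 ≤ w i) (W : ℤ)
    (S : Finset (Fin m)) (hS : (W:ℝ) = ∑ i ∈ S, (w i : ℝ)) :
    ∃ c x : Fin (m+2) → ℝ, inU m w c ∧ optimalKP (avec m w) c ((W:ℝ) + 2 * eps) x ∧
      -Mval m w - (W:ℝ) + eps ^ 2 / Mval m w = ∑ i, dvec m w i * x i := by
  classical
  have ha := avec_pos (w := w) hw
  have hMpos : 0 < Mval m w := Mval_pos hw
  have hepsM : eps ≤ Mval m w := by
    have := sumw_pos hw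
    have h1 : eps ≤ 1 := by norm_num [eps]
    simp only [Mval]; linarith
  set P : Fin (m+2) → Prop := fun i => i = i0 m ∨ ∃ j ∈ S, mid j = i with hP
  set c : Fin (m+2) → ℝ := fun i =>
    if P i then ((m + 2) + ((i : ℕ) + 1)) * avec m w i else ((i : ℕ) + 1) * avec m w i with hc
  set x : Fin (m+2) → ℝ := fun i =>
    if P i then 1 else if i = iL m then eps / Mval m w else 0 with hx
  have hPi0 : P (i0 m) := Or.inl rfl
  have hPiL : ¬ P (iL m) := by
    rintro (h | ⟨j, _, hj⟩)
    · exact i0_ne_iL m h.symm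
    · exact mid_ne_iL j hj
  have hPmid : ∀ i : Fin m, P (mid i) ↔ i ∈ S := by
    intro i
    constructor
    · rintro (h | ⟨j, hjS, hj⟩)
      · exact absurd h (mid_ne_i0 i)
      · rwa [← mid_inj hj]
    · intro h; exact Or.inr ⟨i, h, rfl⟩
  have hx_i0 : x (i0 m) = 1 := by simp [hx, hPi0]
  have hx_iL : x (iL m) = eps / Mval m w := by simp [hx, hPiL]
  have hx_mid : ∀ i : Fin m, x (mid i) = if i ∈ S then 1 else 0 := by
    intro i
    by_cases h : i ∈ S
    · simp [hx, (hPmid i).mpr h, h]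
    · have hnp : ¬ P (mid i) := fun hp => h ((hPmid i).mp hp)
      simp [hx, hnp, h, mid_ne_iL i]
  have hxbox : ∀ i, 0 ≤ x i ∧ x i ≤ 1 := by
    intro i
    simp only [hx]
    by_cases h : P i
    · simp only [if_pos h]; norm_num
    · simp only [if_neg h]
      by_cases h2 : i = iL m
      · simp only [if_pos h2]
        constructor
        · exact div_nonneg (le_of_lt eps_pos) (le_of_lt hMpos)
        · rw [div_le_one hMpos]; exact hepsM
      · simp only [if_neg h2]; norm_num
  have hmidsum : (∑ i : Fin m, (w i : ℝ) * x (mid i)) = (W : ℝ) := by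
    have hpt : ∀ i : Fin m, (w i : ℝ) * x (mid i) = if i ∈ S then (w i : ℝ) else 0 := by
      intro i
      rw [hx_mid i]
      by_cases h : i ∈ S <;> simp [h]
    calc (∑ i : Fin m, (w i : ℝ) * x (mid i))
        = ∑ i : Fin m, (if i ∈ S then (w i : ℝ) else 0) :=
          Finset.sum_congr rfl (fun i _ => hpt i)
      _ = ∑ i ∈ S, (w i : ℝ) := by rw [Finset.sum_ite_mem, Finset.univ_inter]
      _ = (W : ℝ) := hS.symm
  have htight : ∑ i, avec m w i * x i = (W:ℝ) + 2 * eps := by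
    rw [sum_split (fun j => avec m w j * x j)]
    simp only [avec_i0, avec_iL, avec_mid, hx_i0, hx_iL]
    rw [hmidsum]
    rw [mul_comm (Mval m w) (eps / Mval m w), div_mul_cancel₀ _ (ne_of_gt hMpos)]
    ring
  have hfeas : feasibleKP (avec m w) ((W:ℝ) + 2 * eps) x :=
    ⟨le_of_eq htight, hxbox⟩
  have hcU : inU m w c := by
    intro i
    by_cases h : P i
    · right; simp only [hc]; rw [if_pos h]
    · left; simp only [hc]; rw [if_neg h]
  have hopt : optimalKP (avec m w) c ((W:ℝ) + 2 * eps) x := by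
    apply certificate hfeas htight (lam := (m:ℝ) + 2) (by positivity)
    · -- lam * a i < c i → x i = 1
      intro i hi
      simp only [hc] at hi
      by_cases h : P i
      · simp only [hx]; rw [if_pos h]
      · exfalso
        rw [if_neg h] at hi
        have hile : ((i:ℕ):ℝ) ≤ (m:ℝ) + 1 := by
          have := i.isLt
          have : (i:ℕ) ≤ m + 1 := by omega
          exact_mod_cast this
        nlinarith [ha i]
    · -- c i < lam * a i → x i = 0
      intro i hi
      simp only [hc] at hi
      by_cases h : P i
      · exfalso
        rw [if_pos h] at hi
        have : (0:ℝ) ≤ ((i:ℕ):ℝ) := Nat.cast_nonneg _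
        nlinarith [ha i]
      · rw [if_neg h] at hi
        simp only [hx]
        rw [if_neg h]
        by_cases h2 : i = iL m
        · exfalso
          rw [h2] at hi
          simp only [iL_val] at hi
          push_cast at hi
          nlinarith [ha (iL m)]
        · rw [if_neg h2]
  refine ⟨c, x, hcU, hopt, ?_⟩
  rw [sum_split (fun j => dvec m w j * x j)]
  simp only [dvec_i0, dvec_iL, dvec_mid, hx_i0, hx_iL]
  have hmidsum2 : (∑ i : Fin m, -(w i : ℝ) * x (mid i)) = -(W : ℝ) := by
    rw [← hmidsum, ← Finset.sum_neg_distrib]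
    exact Finset.sum_congr rfl (fun i _ => by ring)
  rw [hmidsum2]
  rw [mul_comm eps (eps / Mval m w), div_mul_eq_mul_div, ← pow_two]
  ring

end DUhelp

/-- If `W` is a subset sum, then in the discrete uncorrelated reduction
instance `f(W) > f(W + 2ε)`, so `W + 2ε` is not a maximizer of `f` over
`[W, W + 2ε]`; moreover `f(W + 2ε) = −M − W + ε²/M`. -/
theorem discrete_uncorrelated_yes_instance
    (m : ℕ) (w : Fin m → ℤ) (W : ℤ) (hw : ∀ i, 1 ≤ w i)
    (hW1 : 1 ≤ W) (hW2 : W ≤ (∑ i, w i) - 1)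
    (hyes : isSubsetSum m w (W : ℝ)) :
    fval m w ((W : ℝ) + 2 * eps) < fval m w (W : ℝ) ∧
    ¬ IsMaxOn (fval m w) (Set.Icc (W : ℝ) ((W : ℝ) + 2 * eps))
        ((W : ℝ) + 2 * eps) ∧
    fval m w ((W : ℝ) + 2 * eps) = -Mval m w - W + eps ^ 2 / Mval m w := by
  classical
  obtain ⟨S, hS⟩ := hyes
  have hMpos : 0 < Mval m w := DUhelp.Mval_pos hw
  have hW1r : (1:ℝ) ≤ (W:ℝ) := by exact_mod_cast hW1
  have hW2r : (W:ℝ) ≤ (∑ i, (w i:ℝ)) - 1 := by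
    have h : ((W:ℤ):ℝ) ≤ (((∑ i, w i) - 1 : ℤ) : ℝ) := by exact_mod_cast hW2
    push_cast at h
    linarith
  have hM2 : 2 + eps ≤ Mval m w := by simp only [Mval]; linarith
  obtain ⟨c, x, hcU, hopt, hval⟩ := DUhelp.witness hw W S hS
  set L2 : ℝ := -Mval m w - (W:ℝ) + eps ^ 2 / Mval m w with hL2
  have hmem : L2 ∈ {v : ℝ | ∃ c x : Fin (m + 2) → ℝ,
      inU m w c ∧ optimalKP (avec m w) c ((W:ℝ) + 2 * eps) x ∧
      v = ∑ i, dvec m w i * x i} := ⟨c, x, hcU, hopt, hval⟩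
  have hlow : ∀ v ∈ {v : ℝ | ∃ c x : Fin (m + 2) → ℝ,
      inU m w c ∧ optimalKP (avec m w) c ((W:ℝ) + 2 * eps) x ∧
      v = ∑ i, dvec m w i * x i}, L2 ≤ v := by
    rintro v ⟨c', x', h1, h2, h3⟩
    rw [h3, hL2]
    exact DUhelp.lb2 hw W hW1 hW2 h1 h2
  have hveq : fval m w ((W:ℝ) + 2 * eps) = L2 := by
    unfold fval
    exact le_antisymm (csInf_le ⟨L2, hlow⟩ hmem) (le_csInf ⟨L2, hmem⟩ hlow)
  have hlb1 : -Mval m w - (W:ℝ) + eps ≤ fval m w (W:ℝ) := by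
    unfold fval
    rcases Set.eq_empty_or_nonempty {v : ℝ | ∃ c x : Fin (m + 2) → ℝ,
        inU m w c ∧ optimalKP (avec m w) c (W:ℝ) x ∧
        v = ∑ i, dvec m w i * x i} with h | h
    · rw [h, Real.sInf_empty]
      linarith [DUhelp.eps_pos]
    · apply le_csInf h
      rintro v ⟨c', x', h1, h2, h3⟩
      rw [h3]
      exact DUhelp.lb1 hw W h2.1
  have hL2lt : L2 < -Mval m w - (W:ℝ) + eps := by
    rw [hL2]
    have : eps ^ 2 / Mval m w < eps := by
      rw [div_lt_iff₀ hMpos]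
      nlinarith [DUhelp.eps_pos]
    linarith
  have hmain : fval m w ((W:ℝ) + 2 * eps) < fval m w (W:ℝ) := by
    rw [hveq]
    exact lt_of_lt_of_le hL2lt hlb1
  refine ⟨hmain, ?_, hveq⟩
  intro hmax
  have hWmem : (W:ℝ) ∈ Set.Icc (W:ℝ) ((W:ℝ) + 2 * eps) :=
    ⟨le_refl _, by linarith [DUhelp.eps_pos]⟩
  have := isMaxOn_iff.mp hmax (W:ℝ) hWmem
  linarith

end
end

section
/- In the discrete uncorrelated reduction instance, there exists S ⊆ {1,…,m} with Σ_{i∈S} w_i = W if and only if f(W + 2ε) = −M − W + ε²/M. Equivalently, if no such S exists, then f(W + 2ε) = −M − V + (ε/M)(W + 2ε − V − ε) > −M − W + ε²/M, where V is the largest subset sum with V < W. -/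
noncomputable section

lemma sum_update {n : ℕ} (c x : Fin n → ℝ) (j : Fin n) (v : ℝ) :
    ∑ i, c i * Function.update x j v i = (∑ i, c i * x i) + c j * (v - x j) := by
  have h : ∀ i : Fin n, i ∈ Finset.univ → c i * Function.update x j v i
      = c i * x i + (if i = j then c j * (v - x j) else 0) := by
    intro i _
    by_cases h : i = j
    · subst h; simp [Function.update_self]; ring
    · simp [Function.update_of_ne h, h]
  rw [Finset.sum_congr rfl h, Finset.sum_add_distrib, Finset.sum_ite_eq' Finset.univ j]
  simp

lemma opt_binding {n : ℕ} {a c : Fin n → ℝ} {b : ℝ} {x : Fin n → ℝ}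
    (ha : ∀ i, 0 < a i) (hx : optimalKP a c b x) {j : Fin n}
    (hj1 : x j < 1) (hj2 : 0 < c j) : ∑ i, a i * x i = b := by
  by_contra h
  have hlt : ∑ i, a i * x i < b := lt_of_le_of_ne hx.1.1 h
  set δ := min (1 - x j) ((b - ∑ i, a i * x i) / a j) with hδ
  have hδpos : 0 < δ := lt_min (by linarith) (div_pos (by linarith) (ha j))
  have hδ1 : δ ≤ 1 - x j := min_le_left _ _
  have hδ2 : δ ≤ (b - ∑ i, a i * x i) / a j := min_le_right _ _
  have hδ2' : a j * δ ≤ b - ∑ i, a i * x i := by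
    rw [mul_comm]
    exact (le_div_iff₀ (ha j)).mp hδ2 |>.trans_eq rfl
  have hy : feasibleKP a b (Function.update x j (x j + δ)) := by
    constructor
    · rw [sum_update]; linarith
    · intro i
      by_cases h : i = j
      · subst h; rw [Function.update_self]
        exact ⟨by linarith [(hx.1.2 i).1], by linarith⟩
      · rw [Function.update_of_ne h]; exact hx.1.2 i
  have := hx.2 _ hy
  rw [sum_update] at this
  nlinarith

lemma opt_exchange {n : ℕ} {a c : Fin n → ℝ} {b : ℝ} {x : Fin n → ℝ}
    (ha : ∀ i, 0 < a i) (hx : optimalKP a c b x) {i j : Fin n}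
    (hij : i ≠ j) (hxi : 0 < x i) (hxj : x j < 1) : c j * a i ≤ c i * a j := by
  set δ := min (a i * x i) (a j * (1 - x j)) with hδ
  have hδpos : 0 < δ := lt_min (mul_pos (ha i) hxi) (mul_pos (ha j) (by linarith))
  have hδ1 : δ ≤ a i * x i := min_le_left _ _
  have hδ2 : δ ≤ a j * (1 - x j) := min_le_right _ _
  set y := Function.update (Function.update x i (x i - δ / a i)) j (x j + δ / a j) with hy
  have hsum : ∀ g : Fin n → ℝ, ∑ k, g k * y k
      = (∑ k, g k * x k) + g i * (-(δ / a i)) + g j * (δ / a j) := by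
    intro g
    rw [hy, sum_update, sum_update, Function.update_of_ne hij.symm]
    ring
  have hfeas : feasibleKP a b y := by
    constructor
    · rw [hsum a]
      have h1 : a i * (δ / a i) = δ := by
        rw [← mul_div_assoc, mul_div_cancel_left₀ _ (ne_of_gt (ha i))]
      have h2 : a j * (δ / a j) = δ := by
        rw [← mul_div_assoc, mul_div_cancel_left₀ _ (ne_of_gt (ha j))]
      have := hx.1.1
      nlinarith
    · intro k
      by_cases hk : k = j
      · subst hk
        rw [hy, Function.update_self]
        have h2 : δ / a k ≤ 1 - x k := (div_le_iff₀ (ha k)).mpr (by linarith)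
        exact ⟨by linarith [(hx.1.2 k).1, le_of_lt (div_pos hδpos (ha k))], by linarith⟩
      · rw [hy, Function.update_of_ne hk]
        by_cases hk' : k = i
        · subst hk'
          rw [Function.update_self]
          have h1 : δ / a k ≤ x k := (div_le_iff₀ (ha k)).mpr (by linarith)
          exact ⟨by linarith, by linarith [(hx.1.2 k).2, le_of_lt (div_pos hδpos (ha k))]⟩
        · rw [Function.update_of_ne hk']; exact hx.1.2 k
  have := hx.2 _ hfeas
  rw [hsum c] at this
  have h3 : c j * (δ / a j) ≤ c i * (δ / a i) := by linarith
  have e1 : c j * (δ / a j) = c j / a j * δ := by ring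
  have e2 : c i * (δ / a i) = c i / a i * δ := by ring
  have h5 : c j / a j ≤ c i / a i :=
    le_of_mul_le_mul_right (by linarith) hδpos
  exact (div_le_div_iff₀ (ha j) (ha i)).mp h5

lemma opt_certificate {n : ℕ} {a c : Fin n → ℝ} {b : ℝ} {x : Fin n → ℝ}
    (hfe : feasibleKP a b x) (hb : ∑ i, a i * x i = b)
    (ρ : ℝ) (hρ : 0 ≤ ρ) (h1 : ∀ i, ρ * a i < c i → x i = 1)
    (h0 : ∀ i, c i < ρ * a i → x i = 0) : optimalKP a c b x := by
  refine ⟨hfe, fun y hy => ?_⟩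
  have key : ∀ i ∈ Finset.univ, c i * y i ≤ c i * x i + ρ * (a i * y i - a i * x i) := by
    intro i _
    rcases lt_trichotomy (c i) (ρ * a i) with h | h | h
    · have hx0 := h0 i h
      have := (hy.2 i).1
      nlinarith
    · rw [h]; nlinarith
    · have hx1 := h1 i h
      have := (hy.2 i).2
      nlinarith
  calc ∑ i, c i * y i ≤ ∑ i, (c i * x i + ρ * (a i * y i - a i * x i)) :=
        Finset.sum_le_sum key
    _ = (∑ i, c i * x i) + ρ * ((∑ i, a i * y i) - (∑ i, a i * x i)) := by
        rw [Finset.sum_add_distrib, ← Finset.mul_sum, Finset.sum_sub_distrib]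
    _ ≤ ∑ i, c i * x i := by nlinarith [hy.1, hb.le, hb.ge]

def idx0 (m : ℕ) : Fin (m + 2) := ⟨0, by omega⟩
def idxL (m : ℕ) : Fin (m + 2) := ⟨m + 1, by omega⟩
def mid {m : ℕ} (j : Fin m) : Fin (m + 2) := ⟨(j : ℕ) + 1, by omega⟩

lemma eps_pos : (0:ℝ) < eps := by norm_num [eps]

lemma avec_idx0 (m : ℕ) (w : Fin m → ℤ) : avec m w (idx0 m) = eps := by
  simp [avec, idx0]

lemma avec_idxL (m : ℕ) (w : Fin m → ℤ) : avec m w (idxL m) = Mval m w := by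
  simp [avec, idxL]

lemma avec_mid (m : ℕ) (w : Fin m → ℤ) (j : Fin m) : avec m w (mid j) = (w j : ℝ) := by
  have h1 : ((mid j : Fin (m+2)) : ℕ) = (j : ℕ) + 1 := rfl
  have hj := j.isLt
  simp only [avec]
  rw [dif_neg (by simp only [mid]; omega), dif_neg (by simp only [mid]; omega)]
  congr 1

lemma dvec_idx0 (m : ℕ) (w : Fin m → ℤ) : dvec m w (idx0 m) = -Mval m w := by
  simp [dvec, idx0]

lemma dvec_idxL (m : ℕ) (w : Fin m → ℤ) : dvec m w (idxL m) = eps := by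
  simp [dvec, idxL]

lemma dvec_mid (m : ℕ) (w : Fin m → ℤ) (j : Fin m) : dvec m w (mid j) = -(w j : ℝ) := by
  have hj := j.isLt
  simp only [dvec]
  rw [dif_neg (by simp only [mid]; omega), dif_neg (by simp only [mid]; omega)]
  congr 2

lemma mid_ne_idx0 {m : ℕ} (j : Fin m) : mid j ≠ idx0 m := by
  simp [mid, idx0, Fin.ext_iff]

lemma mid_ne_idxL {m : ℕ} (j : Fin m) : mid j ≠ idxL m := by
  have := j.isLt
  simp only [mid, idxL, ne_eq, Fin.mk.injEq]
  omega

lemma idx0_ne_idxL (m : ℕ) : idx0 m ≠ idxL m := by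
  simp [idx0, idxL, Fin.ext_iff]

lemma mid_inj {m : ℕ} {j j' : Fin m} (h : mid j = mid j') : j = j' := by
  apply Fin.ext
  have : ((mid j : Fin (m+2)) : ℕ) = ((mid j' : Fin (m+2)) : ℕ) := by rw [h]
  simpa [mid] using this

lemma index_cases {m : ℕ} (i : Fin (m + 2)) :
    i = idx0 m ∨ i = idxL m ∨ ∃ j : Fin m, i = mid j := by
  have hi := i.isLt
  rcases Nat.eq_zero_or_pos (i : ℕ) with h | h
  · left; exact Fin.ext h
  · by_cases hL : (i : ℕ) = m + 1
    · right; left; exact Fin.ext hL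
    · right; right
      refine ⟨⟨(i : ℕ) - 1, by omega⟩, ?_⟩
      apply Fin.ext
      show (i : ℕ) = (i : ℕ) - 1 + 1
      omega

lemma sum_split {m : ℕ} (f : Fin (m + 2) → ℝ) :
    ∑ i, f i = f (idx0 m) + (∑ j : Fin m, f (mid j)) + f (idxL m) := by
  rw [Fin.sum_univ_castSucc, Fin.sum_univ_succ]
  have h0 : (0 : Fin (m+1)).castSucc = idx0 m := rfl
  have hL : Fin.last (m+1) = idxL m := rfl
  have hm : ∀ j : Fin m, (j.succ).castSucc = mid j := fun j => rfl
  simp only [h0, hL, hm]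

set_option maxHeartbeats 2000000 in
open Classical in
lemma lower_bound (m : ℕ) (w : Fin m → ℤ) (W : ℤ) (hw : ∀ i, 1 ≤ w i)
    (hW1 : 1 ≤ W) (hW2 : W ≤ (∑ i, w i) - 1)
    (Smax : Finset (Fin m)) (hKW : (∑ j ∈ Smax, w j) ≤ W)
    (hmax : ∀ S : Finset (Fin m), (∑ j ∈ S, w j) ≤ W → (∑ j ∈ S, w j) ≤ ∑ j ∈ Smax, w j)
    (v : ℝ) (hv : v ∈ {v : ℝ | ∃ c x : Fin (m + 2) → ℝ,
      inU m w c ∧ optimalKP (avec m w) c ((W : ℝ) + 2 * eps) x ∧ v = ∑ i, dvec m w i * x i}) :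
    -Mval m w - (∑ j ∈ Smax, (w j : ℝ))
      + eps / Mval m w * ((W : ℝ) + 2 * eps - (∑ j ∈ Smax, (w j : ℝ)) - eps) ≤ v := by
  obtain ⟨c, x, hc, hx, rfl⟩ := hv
  -- notation
  set b : ℝ := (W : ℝ) + 2 * eps with hb_def
  set M : ℝ := Mval m w with hM_def
  set K : ℝ := ∑ j ∈ Smax, (w j : ℝ) with hK_def
  have heps : eps = 1/4 := rfl
  have hwR : ∀ j, (1:ℝ) ≤ (w j : ℝ) := fun j => by exact_mod_cast hw j
  have hsnn : (0:ℝ) ≤ ∑ i, (w i : ℝ) :=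
    Finset.sum_nonneg fun i _ => by linarith [hwR i]
  have hsw : (W:ℝ) + 1 ≤ ∑ i, (w i : ℝ) := by
    have : (W:ℝ) ≤ (∑ i, (w i : ℝ)) - 1 := by exact_mod_cast hW2
    linarith
  have hWR : (1:ℝ) ≤ (W:ℝ) := by exact_mod_cast hW1
  have hMval : M = (∑ i, (w i : ℝ)) + eps := rfl
  have hMpos : 0 < M := by rw [hMval]; linarith [eps_pos]
  have hbM : b < M := by rw [hMval, hb_def, heps]; linarith
  have hbpos : 0 < b := by rw [hb_def, heps]; linarith
  have hKnn : (0:ℝ) ≤ K := Finset.sum_nonneg fun j _ => by linarith [hwR j]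
  have hKWR : K ≤ (W:ℝ) := by
    rw [hK_def]
    push_cast [← Int.cast_sum]
    exact_mod_cast hKW
  have hapos : ∀ i, 0 < avec m w i := by
    intro i
    rcases index_cases i with h | h | ⟨j, h⟩ <;> subst h
    · rw [avec_idx0]; exact eps_pos
    · rw [avec_idxL, ← hM_def]; exact hMpos
    · rw [avec_mid]; linarith [hwR j]
  have hx01 := hx.1.2
  have hxb : ∑ i, avec m w i * x i ≤ b := hx.1.1
  have haxnn : ∀ i, 0 ≤ avec m w i * x i :=
    fun i => mul_nonneg (hapos i).le (hx01 i).1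
  have hmidnn : (0:ℝ) ≤ ∑ j : Fin m, avec m w (mid j) * x (mid j) :=
    Finset.sum_nonneg fun j _ => haxnn (mid j)
  have hsuma : ∑ i, avec m w i * x i
      = avec m w (idx0 m) * x (idx0 m) + (∑ j : Fin m, avec m w (mid j) * x (mid j))
        + avec m w (idxL m) * x (idxL m) := sum_split _
  have hsumd : ∑ i, dvec m w i * x i
      = dvec m w (idx0 m) * x (idx0 m) + (∑ j : Fin m, dvec m w (mid j) * x (mid j))
        + dvec m w (idxL m) * x (idxL m) := sum_split _
  have hxiL1 : x (idxL m) < 1 := by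
    by_contra h
    push_neg at h
    have h1 : M * 1 ≤ M * x (idxL m) := by
      apply mul_le_mul_of_nonneg_left h hMpos.le
    have h2 : avec m w (idxL m) * x (idxL m) ≤ ∑ i, avec m w i * x i := by
      rw [hsuma]
      have := haxnn (idx0 m)
      linarith
    rw [avec_idxL, ← hM_def] at h2
    linarith
  -- ratio comparison tool
  have hrat : ∀ (i k : Fin (m+2)) (ri rk : ℝ), i ≠ k → 0 < x i → x k < 1 →
      c i = ri * avec m w i → c k = rk * avec m w k → rk ≤ ri := by
    intro i k ri rk hik hxi hxk hci hck
    have h := opt_exchange hapos hx hik hxi hxk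
    rw [hci, hck] at h
    have hai := hapos i
    have hak := hapos k
    have h2 : rk * (avec m w i * avec m w k) ≤ ri * (avec m w i * avec m w k) :=
      calc rk * (avec m w i * avec m w k) = rk * avec m w k * avec m w i := by ring
        _ ≤ ri * avec m w i * avec m w k := h
        _ = ri * (avec m w i * avec m w k) := by ring
    exact le_of_mul_le_mul_right h2 (mul_pos hai hak)
  -- concrete values of c
  have hc0 : c (idx0 m) = 1 * eps ∨ c (idx0 m) = ((m:ℝ) + 3) * eps := by
    rcases hc (idx0 m) with h | h
    · left; rw [h, avec_idx0]
      have : ((idx0 m : Fin (m+2)) : ℕ) = 0 := rfl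
      rw [this]; norm_num
    · right; rw [h, avec_idx0]
      have : ((idx0 m : Fin (m+2)) : ℕ) = 0 := rfl
      rw [this]; push_cast; ring_nf
  have hcL : c (idxL m) = ((m:ℝ) + 2) * M ∨ c (idxL m) = (2*(m:ℝ) + 4) * M := by
    rcases hc (idxL m) with h | h
    · left; rw [h, avec_idxL, ← hM_def]
      have : ((idxL m : Fin (m+2)) : ℕ) = m + 1 := rfl
      rw [this]; push_cast; ring_nf
    · right; rw [h, avec_idxL, ← hM_def]
      have : ((idxL m : Fin (m+2)) : ℕ) = m + 1 := rfl
      rw [this]; push_cast; ring_nf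
  have hcm : ∀ j : Fin m, c (mid j) = (((j:ℕ):ℝ) + 2) * (w j : ℝ)
      ∨ c (mid j) = ((m:ℝ) + ((j:ℕ):ℝ) + 4) * (w j : ℝ) := by
    intro j
    rcases hc (mid j) with h | h
    · left; rw [h, avec_mid]
      have : ((mid j : Fin (m+2)) : ℕ) = (j:ℕ) + 1 := rfl
      rw [this]; push_cast; ring_nf
    · right; rw [h, avec_mid]
      have : ((mid j : Fin (m+2)) : ℕ) = (j:ℕ) + 1 := rfl
      rw [this]; push_cast; ring_nf
  have hjm : ∀ j : Fin m, ((j:ℕ):ℝ) ≤ (m:ℝ) - 1 := by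
    intro j
    have := j.isLt
    have : ((j:ℕ):ℝ) + 1 ≤ (m:ℝ) := by exact_mod_cast this
    linarith
  have hjnn : ∀ j : Fin m, (0:ℝ) ≤ ((j:ℕ):ℝ) := fun j => Nat.cast_nonneg _
  have hmnn : (0:ℝ) ≤ (m:ℝ) := Nat.cast_nonneg _
  -- the target value and a crude bound on it
  set q : ℝ := eps / M with hq_def
  have hq0 : 0 < q := div_pos eps_pos hMpos
  have hqM : q * M = eps := by rw [hq_def]; field_simp
  have htgt : -M - K + q * (b - K - eps) ≤ -((W:ℝ)) - 1 := by
    have h1 : q * (b - K - eps) ≤ q * M := by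
      apply mul_le_mul_of_nonneg_left _ hq0.le
      linarith [eps_pos]
    rw [hqM] at h1
    rw [hMval] at *
    linarith [eps_pos]
  have hbW : (W:ℝ) < b := by rw [hb_def, heps]; linarith
  have hb2 : b = (W:ℝ) + 1/2 := by rw [hb_def, heps]; ring
  rcases hcL with hcLlow | hcLhigh
  · -- CASE B : c at the big item is low, c iL = (m+2) M
    have hcLpos : 0 < c (idxL m) := by
      rw [hcLlow]; exact mul_pos (by positivity) hMpos
    set S : Finset (Fin m) :=
      Finset.univ.filter (fun j => c (mid j) = ((m:ℝ) + ((j:ℕ):ℝ) + 4) * (w j : ℝ)) with hS_def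
    have hcmS : ∀ j ∈ S, c (mid j) = ((m:ℝ) + ((j:ℕ):ℝ) + 4) * (w j:ℝ) :=
      fun j hj => (Finset.mem_filter.mp hj).2
    have hcmS' : ∀ j ∉ S, c (mid j) = (((j:ℕ):ℝ) + 2) * (w j:ℝ) := by
      intro j hj
      rcases hcm j with h | h
      · exact h
      · exact absurd (Finset.mem_filter.mpr ⟨Finset.mem_univ j, h⟩) hj
    set V : ℝ := ∑ j ∈ S, (w j:ℝ) with hV_def
    have hVnn : 0 ≤ V := Finset.sum_nonneg fun j _ => by linarith [hwR j]
    have hVcast : V = ((∑ j ∈ S, w j : ℤ) : ℝ) := by rw [hV_def]; push_cast; rfl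
    have hzeroS : ∀ jj ∈ S, x (mid jj) < 1 →
        (x (idx0 m) = 0 ∧ x (idxL m) = 0 ∧ ∀ j ∉ S, x (mid j) = 0) := by
      intro jj hjj hlt
      have key : ∀ k, k ≠ mid jj →
          (∃ rk : ℝ, c k = rk * avec m w k ∧ rk ≤ (m:ℝ)+3) → x k = 0 := by
        rintro k hk ⟨rk, hck, hrk⟩
        by_contra h
        have hxk : 0 < x k := lt_of_le_of_ne (hx01 k).1 (Ne.symm h)
        have := hrat k (mid jj) rk ((m:ℝ)+((jj:ℕ):ℝ)+4) hk hxk hlt hck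
          (by rw [avec_mid]; exact hcmS jj hjj)
        linarith [hjnn jj]
      refine ⟨?_, ?_, ?_⟩
      · refine key _ (Ne.symm (mid_ne_idx0 jj)) ?_
        rcases hc0 with h | h
        · exact ⟨1, by rw [avec_idx0]; exact h, by linarith⟩
        · exact ⟨(m:ℝ)+3, by rw [avec_idx0]; exact h, le_refl _⟩
      · exact key _ (Ne.symm (mid_ne_idxL jj))
          ⟨(m:ℝ)+2, by rw [avec_idxL, ← hM_def]; exact hcLlow, by linarith⟩
      · intro j hj
        have hne : mid j ≠ mid jj := fun hEq => hj ((mid_inj hEq) ▸ hjj)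
        exact key _ hne ⟨((j:ℕ):ℝ)+2, by rw [avec_mid]; exact hcmS' j hj,
          by linarith [hjm j]⟩
    have hmsum : ∀ (g : Fin m → ℝ), (∀ j ∉ S, x (mid j) = 0) →
        ∑ j : Fin m, g j * x (mid j) = ∑ j ∈ S, g j * x (mid j) := by
      intro g h
      symm
      apply Finset.sum_subset (Finset.subset_univ S)
      intro j _ hj
      rw [h j hj, mul_zero]
    have hamid : ∑ j : Fin m, avec m w (mid j) * x (mid j)
        = ∑ j : Fin m, (w j:ℝ) * x (mid j) :=
      Finset.sum_congr rfl fun j _ => by rw [avec_mid]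
    have hdmid : ∑ j : Fin m, dvec m w (mid j) * x (mid j)
        = -∑ j : Fin m, (w j:ℝ) * x (mid j) := by
      rw [← Finset.sum_neg_distrib]
      exact Finset.sum_congr rfl fun j _ => by rw [dvec_mid]; ring
    rcases le_or_gt (∑ j ∈ S, w j) W with hsw' | hsw'
    · -- sub-case B1 : V ≤ W
      have hVW : V ≤ (W:ℝ) := by rw [hVcast]; exact_mod_cast hsw'
      have hVK : V ≤ K := by
        rw [hVcast, hK_def]
        have h := hmax S hsw'
        push_cast
        exact_mod_cast h
      have claimM : ∀ j ∈ S, x (mid j) = 1 := by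
        intro j hj
        by_contra h
        have hlt : x (mid j) < 1 := lt_of_le_of_ne (hx01 _).2 h
        obtain ⟨hz0, hzL, hzS⟩ := hzeroS j hj hlt
        have hcpos : 0 < c (mid j) := by
          rw [hcmS j hj]; exact mul_pos (by positivity) (by linarith [hwR j])
        have hbind := opt_binding hapos hx hlt hcpos
        have h1 : ∑ i, avec m w i * x i = ∑ j' ∈ S, (w j':ℝ) * x (mid j') := by
          rw [hsuma, hz0, hzL, mul_zero, mul_zero, add_zero, zero_add, hamid, hmsum _ hzS]
        have h2 : ∑ j' ∈ S, (w j':ℝ) * x (mid j') ≤ V := by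
          rw [hV_def]
          apply Finset.sum_le_sum
          intro j' hj'
          exact mul_le_of_le_one_right (by linarith [hwR j']) (hx01 (mid j')).2
        rw [h1] at hbind
        linarith
      have claim0 : ∀ j ∉ S, x (mid j) = 0 := by
        intro j hj
        by_contra h
        have hxk : 0 < x (mid j) := lt_of_le_of_ne (hx01 _).1 (Ne.symm h)
        have := hrat (mid j) (idxL m) (((j:ℕ):ℝ)+2) ((m:ℝ)+2) (mid_ne_idxL j) hxk hxiL1
          (by rw [avec_mid]; exact hcmS' j hj) (by rw [avec_idxL, ← hM_def]; exact hcLlow)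
        linarith [hjm j]
      have hmidA : ∑ j : Fin m, avec m w (mid j) * x (mid j) = V := by
        rw [hamid, hmsum _ claim0, hV_def]
        exact Finset.sum_congr rfl fun j hj => by rw [claimM j hj, mul_one]
      have hmidD : ∑ j : Fin m, dvec m w (mid j) * x (mid j) = -V := by
        rw [hdmid, hmsum _ claim0, hV_def, neg_inj]
        exact Finset.sum_congr rfl fun j hj => by rw [claimM j hj, mul_one]
      rcases hc0 with hc0low | hc0high
      · -- B1b : item 0 low ratio, x 0 = 0
        have hx0 : x (idx0 m) = 0 := by
          by_contra h
          have hpos : 0 < x (idx0 m) := lt_of_le_of_ne (hx01 _).1 (Ne.symm h)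
          have := hrat (idx0 m) (idxL m) 1 ((m:ℝ)+2) (idx0_ne_idxL m) hpos hxiL1
            (by rw [avec_idx0]; exact hc0low) (by rw [avec_idxL, ← hM_def]; exact hcLlow)
          linarith
        have hval : ∑ i, dvec m w i * x i = -V + eps * x (idxL m) := by
          rw [hsumd, hx0, hmidD, dvec_idxL]
          ring
        have hexL : 0 ≤ eps * x (idxL m) := mul_nonneg eps_pos.le (hx01 _).1
        rw [hval]
        linarith
      · -- B1a : item 0 high ratio, x 0 = 1
        have hc0pos : 0 < c (idx0 m) := by
          rw [hc0high]; exact mul_pos (by positivity) eps_pos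
        have hx0 : x (idx0 m) = 1 := by
          by_contra h
          have hlt : x (idx0 m) < 1 := lt_of_le_of_ne (hx01 _).2 h
          have hxL0 : x (idxL m) = 0 := by
            by_contra h'
            have hpos : 0 < x (idxL m) := lt_of_le_of_ne (hx01 _).1 (Ne.symm h')
            have := hrat (idxL m) (idx0 m) ((m:ℝ)+2) ((m:ℝ)+3) (Ne.symm (idx0_ne_idxL m))
              hpos hlt (by rw [avec_idxL, ← hM_def]; exact hcLlow)
              (by rw [avec_idx0]; exact hc0high)
            linarith
          have hbind := opt_binding hapos hx hlt hc0pos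
          have h1 : ∑ i, avec m w i * x i = eps * x (idx0 m) + V := by
            rw [hsuma, avec_idx0, hmidA, avec_idxL, hxL0]
            ring
          have hx0e : eps * x (idx0 m) < eps :=
            calc eps * x (idx0 m) < eps * 1 := mul_lt_mul_of_pos_left hlt eps_pos
              _ = eps := mul_one _
          rw [h1] at hbind
          linarith [heps, hx0e, hVW, hb2]
        have hbind := opt_binding hapos hx hxiL1 hcLpos
        have h1 : ∑ i, avec m w i * x i = eps + V + M * x (idxL m) := by
          rw [hsuma, avec_idx0, hx0, hmidA, avec_idxL, ← hM_def]
          ring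
        have hxLval : M * x (idxL m) = b - eps - V := by
          rw [h1] at hbind
          linarith
        have hqe : eps * x (idxL m) = q * (b - eps - V) := by
          rw [← hxLval, hq_def]
          field_simp
        have hval : ∑ i, dvec m w i * x i = -M - V + q * (b - eps - V) := by
          rw [hsumd, dvec_idx0, ← hM_def, hx0, hmidD, dvec_idxL, hqe]
          ring
        have hdiff : (-M - V + q*(b - eps - V)) - (-M - K + q*(b - K - eps))
            = (K - V)*(1 + q) := by ring
        have hnn : 0 ≤ (K - V)*(1 + q) := mul_nonneg (by linarith) (by linarith)
        rw [hval]
        linarith [hdiff, hnn]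
    · -- sub-case B2 : V ≥ W + 1
      have hVW1 : (W:ℝ) + 1 ≤ V := by
        rw [hVcast]
        have : W + 1 ≤ ∑ j ∈ S, w j := hsw'
        exact_mod_cast this
      have hex : ∃ j ∈ S, x (mid j) < 1 := by
        by_contra h
        push_neg at h
        have h1 : V ≤ ∑ j ∈ S, (w j:ℝ) * x (mid j) := by
          rw [hV_def]
          apply Finset.sum_le_sum
          intro j hj
          exact le_mul_of_one_le_right (by linarith [hwR j]) (h j hj)
        have h2 : ∑ j ∈ S, (w j:ℝ) * x (mid j)
            ≤ ∑ j : Fin m, avec m w (mid j) * x (mid j) := by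
          rw [hamid]
          exact Finset.sum_le_sum_of_subset_of_nonneg (Finset.subset_univ S)
            (fun j _ _ => mul_nonneg (by linarith [hwR j]) (hx01 _).1)
        have h3 := haxnn (idx0 m)
        have h4 := haxnn (idxL m)
        rw [hsuma] at hxb
        linarith
      obtain ⟨j, hjS, hlt⟩ := hex
      obtain ⟨hz0, hzL, hzS⟩ := hzeroS j hjS hlt
      have hcpos : 0 < c (mid j) := by
        rw [hcmS j hjS]; exact mul_pos (by positivity) (by linarith [hwR j])
      have hbind := opt_binding hapos hx hlt hcpos
      have h1 : ∑ i, avec m w i * x i = ∑ j' ∈ S, (w j':ℝ) * x (mid j') := by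
        rw [hsuma, hz0, hzL, mul_zero, mul_zero, add_zero, zero_add, hamid, hmsum _ hzS]
      have h2 : ∑ i, dvec m w i * x i = -∑ j' ∈ S, (w j':ℝ) * x (mid j') := by
        rw [hsumd, hz0, hzL, mul_zero, mul_zero, add_zero, zero_add, hdmid, hmsum _ hzS]
      rw [h2, ← h1, hbind]
      linarith
  · -- CASE A : c at the big item is high, everything else zero
    have hA : ∀ k, k ≠ idxL m → x k = 0 := by
      intro k hk
      by_contra h
      have hxk : 0 < x k := lt_of_le_of_ne (hx01 k).1 (Ne.symm h)
      rcases index_cases k with h0 | hL | ⟨j, hj⟩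
      · subst h0
        rcases hc0 with hcc | hcc
        · have := hrat _ (idxL m) 1 (2*(m:ℝ)+4) hk hxk hxiL1
            (by rw [avec_idx0]; exact hcc) (by rw [avec_idxL, ← hM_def]; exact hcLhigh)
          linarith
        · have := hrat _ (idxL m) ((m:ℝ)+3) (2*(m:ℝ)+4) hk hxk hxiL1
            (by rw [avec_idx0]; exact hcc) (by rw [avec_idxL, ← hM_def]; exact hcLhigh)
          linarith
      · exact absurd hL hk
      · subst hj
        rcases hcm j with hcc | hcc
        · have := hrat _ (idxL m) (((j:ℕ):ℝ)+2) (2*(m:ℝ)+4) hk hxk hxiL1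
            (by rw [avec_mid]; exact hcc) (by rw [avec_idxL, ← hM_def]; exact hcLhigh)
          linarith [hjm j]
        · have := hrat _ (idxL m) ((m:ℝ)+((j:ℕ):ℝ)+4) (2*(m:ℝ)+4) hk hxk hxiL1
            (by rw [avec_mid]; exact hcc) (by rw [avec_idxL, ← hM_def]; exact hcLhigh)
          linarith [hjm j]
    have hmid0 : ∑ j : Fin m, dvec m w (mid j) * x (mid j) = 0 :=
      Finset.sum_eq_zero fun j _ => by rw [hA _ (mid_ne_idxL j), mul_zero]
    have hval : ∑ i, dvec m w i * x i = eps * x (idxL m) := by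
      rw [hsumd, hA _ (idx0_ne_idxL m), hmid0, dvec_idxL]
      ring
    have hexL : 0 ≤ eps * x (idxL m) := mul_nonneg eps_pos.le (hx01 _).1
    rw [hval]
    linarith

set_option maxHeartbeats 1000000 in
open Classical in
lemma mem_val (m : ℕ) (w : Fin m → ℤ) (W : ℤ) (hw : ∀ i, 1 ≤ w i)
    (hW1 : 1 ≤ W) (hW2 : W ≤ (∑ i, w i) - 1)
    (S : Finset (Fin m)) (hle : (∑ j ∈ S, w j) ≤ W) :
    (-Mval m w - (∑ j ∈ S, (w j : ℝ))
      + eps / Mval m w * ((W : ℝ) + 2 * eps - (∑ j ∈ S, (w j : ℝ)) - eps)) ∈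
    {v : ℝ | ∃ c x : Fin (m + 2) → ℝ,
      inU m w c ∧ optimalKP (avec m w) c ((W : ℝ) + 2 * eps) x ∧
        v = ∑ i, dvec m w i * x i} := by
  have heps : eps = 1/4 := rfl
  have hwR : ∀ j, (1:ℝ) ≤ (w j : ℝ) := fun j => by exact_mod_cast hw j
  have hsw : (W:ℝ) + 1 ≤ ∑ i, (w i : ℝ) := by
    have : (W:ℝ) ≤ (∑ i, (w i : ℝ)) - 1 := by exact_mod_cast hW2
    linarith
  have hWR : (1:ℝ) ≤ (W:ℝ) := by exact_mod_cast hW1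
  set b : ℝ := (W : ℝ) + 2 * eps with hb_def
  set M : ℝ := Mval m w with hM_def
  set V : ℝ := ∑ j ∈ S, (w j : ℝ) with hV_def
  have hMval : M = (∑ i, (w i : ℝ)) + eps := rfl
  have hMpos : 0 < M := by rw [hMval]; linarith [eps_pos]
  have hbM : b < M := by rw [hMval, hb_def, heps]; linarith
  have hVnn : 0 ≤ V := Finset.sum_nonneg fun j _ => by linarith [hwR j]
  have hVW : V ≤ (W:ℝ) := by
    rw [hV_def]
    push_cast
    exact_mod_cast hle
  have hapos : ∀ i, 0 < avec m w i := by
    intro i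
    rcases index_cases i with h | h | ⟨j, h⟩ <;> subst h
    · rw [avec_idx0]; exact eps_pos
    · rw [avec_idxL, ← hM_def]; exact hMpos
    · rw [avec_mid]; linarith [hwR j]
  set r : ℝ := b - eps - V with hr_def
  have hre : eps ≤ r := by rw [hr_def, hb_def]; linarith
  have hrM : r < M := by rw [hr_def, hb_def]; linarith [eps_pos]
  set c : Fin (m+2) → ℝ := fun i =>
    if i = idx0 m ∨ (∃ j ∈ S, i = mid j)
    then ((m + 2) + ((i : ℕ) + 1)) * avec m w i
    else ((i : ℕ) + 1) * avec m w i with hc_def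
  set x : Fin (m+2) → ℝ := fun i =>
    if i = idx0 m then 1 else if i = idxL m then r / M
    else if (∃ j ∈ S, i = mid j) then 1 else 0 with hx_def
  have hx0 : x (idx0 m) = 1 := if_pos rfl
  have hxL : x (idxL m) = r / M := by
    simp [hx_def, (idx0_ne_idxL m).symm]
  have hxm : ∀ j : Fin m, x (mid j) = if j ∈ S then 1 else 0 := by
    intro j
    simp only [hx_def]
    rw [if_neg (mid_ne_idx0 j), if_neg (mid_ne_idxL j)]
    congr 1
    simp only [eq_iff_iff]
    constructor
    · rintro ⟨j', hj', hEq⟩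
      rwa [mid_inj hEq]
    · intro hj
      exact ⟨j, hj, rfl⟩
  have hcondL : ¬ (idxL m = idx0 m ∨ ∃ j ∈ S, idxL m = mid j) := by
    rintro (h | ⟨j, _, h⟩)
    · exact idx0_ne_idxL m h.symm
    · exact mid_ne_idxL j h.symm
  have hcL : c (idxL m) = ((m:ℝ) + 2) * M := by
    simp only [hc_def]
    rw [if_neg hcondL]
    rw [avec_idxL, ← hM_def]
    have : ((idxL m : Fin (m+2)) : ℕ) = m + 1 := rfl
    rw [this]
    push_cast
    ring
  have hrMx : M * (r / M) = r := by field_simp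
  have hxL01 : 0 ≤ r / M ∧ r / M ≤ 1 := by
    constructor
    · exact div_nonneg (by linarith [eps_pos]) hMpos.le
    · rw [div_le_one hMpos]; linarith
  have hmida : ∑ j : Fin m, avec m w (mid j) * x (mid j) = V := by
    have h1 : ∀ j : Fin m, avec m w (mid j) * x (mid j)
        = if j ∈ S then (w j : ℝ) else 0 := by
      intro j
      rw [avec_mid, hxm j]
      by_cases hj : j ∈ S <;> simp [hj]
    rw [Finset.sum_congr rfl fun j _ => h1 j, Finset.sum_ite_mem, Finset.univ_inter]
  have hmidd : ∑ j : Fin m, dvec m w (mid j) * x (mid j) = -V := by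
    have h1 : ∀ j : Fin m, dvec m w (mid j) * x (mid j)
        = if j ∈ S then -(w j : ℝ) else 0 := by
      intro j
      rw [dvec_mid, hxm j]
      by_cases hj : j ∈ S <;> simp [hj]
    rw [Finset.sum_congr rfl fun j _ => h1 j, Finset.sum_ite_mem, Finset.univ_inter,
      ← Finset.sum_neg_distrib]
  have hsx : ∑ i, avec m w i * x i = b := by
    rw [sum_split (fun i => avec m w i * x i), hx0, hxL, hmida, avec_idx0, avec_idxL, ← hM_def,
      hrMx, hr_def]
    ring
  have hfeas : feasibleKP (avec m w) b x := by
    refine ⟨le_of_eq hsx, ?_⟩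
    intro i
    rcases index_cases i with h | h | ⟨j, h⟩ <;> subst h
    · rw [hx0]; norm_num
    · rw [hxL]; exact hxL01
    · rw [hxm j]; by_cases hj : j ∈ S <;> simp [hj]
  have hinU : inU m w c := by
    intro i
    by_cases h : i = idx0 m ∨ ∃ j ∈ S, i = mid j
    · right; simp only [hc_def]; rw [if_pos h]
    · left; simp only [hc_def]; rw [if_neg h]
  have hilt : ∀ i : Fin (m+2), ((i:ℕ):ℝ) + 1 ≤ (m:ℝ) + 2 := by
    intro i
    have h1 : (i:ℕ) ≤ m + 1 := by have := i.isLt; omega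
    have h2 : ((i:ℕ):ℝ) ≤ (m:ℝ) + 1 := by exact_mod_cast h1
    linarith
  have hopt : optimalKP (avec m w) c b x := by
    apply opt_certificate hfeas hsx ((m:ℝ) + 2) (by positivity)
    · intro i hi
      simp only [hc_def] at hi
      by_cases h : i = idx0 m ∨ ∃ j ∈ S, i = mid j
      · rcases h with h | ⟨j, hj, h⟩
        · rw [h]; exact hx0
        · rw [h, hxm j]; exact if_pos hj
      · rw [if_neg h] at hi
        exact absurd hi (not_lt.mpr (mul_le_mul_of_nonneg_right (hilt i) (hapos i).le))
    · intro i hi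
      simp only [hc_def] at hi
      by_cases h : i = idx0 m ∨ ∃ j ∈ S, i = mid j
      · rw [if_pos h] at hi
        exfalso
        have h1 : (0:ℝ) ≤ ((i:ℕ):ℝ) + 1 := by positivity
        nlinarith [hapos i]
      · rw [if_neg h] at hi
        by_cases hiL : i = idxL m
        · subst hiL
          have hval' : ((idxL m : Fin (m+2)) : ℕ) = m + 1 := rfl
          rw [hval'] at hi
          exfalso
          push_cast at hi
          linarith
        · simp only [hx_def]
          rw [if_neg (fun hh => h (Or.inl hh)), if_neg hiL,
            if_neg (fun hh => h (Or.inr hh))]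
  refine ⟨c, x, hinU, hopt, ?_⟩
  rw [sum_split (fun i => dvec m w i * x i), hx0, hxL, hmidd, dvec_idx0, dvec_idxL, ← hM_def]
  rw [hr_def, hb_def]
  field_simp
  ring

lemma fval_eq (m : ℕ) (w : Fin m → ℤ) (W : ℤ) (hw : ∀ i, 1 ≤ w i)
    (hW1 : 1 ≤ W) (hW2 : W ≤ (∑ i, w i) - 1)
    (Smax : Finset (Fin m)) (hle : (∑ j ∈ Smax, w j) ≤ W)
    (hmax : ∀ S : Finset (Fin m), (∑ j ∈ S, w j) ≤ W → (∑ j ∈ S, w j) ≤ ∑ j ∈ Smax, w j) :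
    fval m w ((W : ℝ) + 2 * eps)
      = -Mval m w - (∑ j ∈ Smax, (w j : ℝ))
        + eps / Mval m w * ((W : ℝ) + 2 * eps - (∑ j ∈ Smax, (w j : ℝ)) - eps) := by
  have hmem := mem_val m w W hw hW1 hW2 Smax hle
  have hlb : ∀ v ∈ {v : ℝ | ∃ c x : Fin (m + 2) → ℝ,
      inU m w c ∧ optimalKP (avec m w) c ((W : ℝ) + 2 * eps) x ∧
        v = ∑ i, dvec m w i * x i},
      -Mval m w - (∑ j ∈ Smax, (w j : ℝ))
        + eps / Mval m w * ((W : ℝ) + 2 * eps - (∑ j ∈ Smax, (w j : ℝ)) - eps) ≤ v :=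
    fun v hv => lower_bound m w W hw hW1 hW2 Smax hle hmax v hv
  rw [fval]
  exact le_antisymm (csInf_le ⟨_, hlb⟩ hmem) (le_csInf ⟨_, hmem⟩ hlb)

lemma exists_max_subset (m : ℕ) (w : Fin m → ℤ) (W : ℤ) (hW1 : 1 ≤ W) :
    ∃ Smax : Finset (Fin m), (∑ j ∈ Smax, w j) ≤ W ∧
      ∀ S : Finset (Fin m), (∑ j ∈ S, w j) ≤ W → (∑ j ∈ S, w j) ≤ ∑ j ∈ Smax, w j := by
  classical
  set F := (Finset.univ : Finset (Finset (Fin m))).filter (fun S => ∑ j ∈ S, w j ≤ W)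
    with hF_def
  have hne : F.Nonempty :=
    ⟨∅, Finset.mem_filter.mpr ⟨Finset.mem_univ _, by simp; omega⟩⟩
  obtain ⟨T, hT, hTmax⟩ := F.exists_max_image (fun S => ∑ j ∈ S, w j) hne
  exact ⟨T, (Finset.mem_filter.mp hT).2,
    fun S hS => hTmax S (Finset.mem_filter.mpr ⟨Finset.mem_univ _, hS⟩)⟩

lemma Mval_pos (m : ℕ) (w : Fin m → ℤ) (hw : ∀ i, 1 ≤ w i) : 0 < Mval m w := by
  have h1 : (0:ℝ) ≤ ∑ i, (w i : ℝ) :=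
    Finset.sum_nonneg fun i _ => by
      have : (1:ℝ) ≤ (w i : ℝ) := by exact_mod_cast hw i
      linarith
  have h2 : Mval m w = (∑ i, (w i : ℝ)) + eps := rfl
  rw [h2]
  linarith [eps_pos]


/-- Evaluating the leader's objective of the discrete uncorrelated reduction
instance at the single point `W + 2ε` decides the subset sum instance:
`W` is a subset sum iff `f(W + 2ε) = −M − W + ε²/M`; if `W` is not a subset
sum, then `f(W + 2ε) = −M − V + (ε/M)(W + 2ε − V − ε) > −M − W + ε²/M`, where
`V` is the largest subset sum below `W`. -/
theorem discrete_uncorrelated_evaluation_decides_subset_sum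
    (m : ℕ) (w : Fin m → ℤ) (W : ℤ) (hw : ∀ i, 1 ≤ w i)
    (hW1 : 1 ≤ W) (hW2 : W ≤ (∑ i, w i) - 1) :
    ((∃ S : Finset (Fin m), (∑ i ∈ S, (w i : ℝ)) = (W : ℝ)) ↔
      fval m w ((W : ℝ) + 2 * eps) = -Mval m w - W + eps ^ 2 / Mval m w) ∧
    (¬ (∃ S : Finset (Fin m), (∑ i ∈ S, (w i : ℝ)) = (W : ℝ)) →
      ∀ V : ℝ, isSubsetSum m w V → V < (W : ℝ) →
        (∀ V' : ℝ, isSubsetSum m w V' → V' < (W : ℝ) → V' ≤ V) →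
        fval m w ((W : ℝ) + 2 * eps)
            = -Mval m w - V + eps / Mval m w * ((W : ℝ) + 2 * eps - V - eps) ∧
        -Mval m w - W + eps ^ 2 / Mval m w < fval m w ((W : ℝ) + 2 * eps)) := by
  obtain ⟨Smax, hle, hmax⟩ := exists_max_subset m w W hW1
  have hfval := fval_eq m w W hw hW1 hW2 Smax hle hmax
  have hM := Mval_pos m w hw
  have hMne : Mval m w ≠ 0 := ne_of_gt hM
  have hq0 : 0 < eps / Mval m w := div_pos eps_pos hM
  have hKcast : (∑ j ∈ Smax, (w j : ℝ)) = ((∑ j ∈ Smax, w j : ℤ) : ℝ) := by push_cast; rfl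
  have hKW : (∑ j ∈ Smax, (w j : ℝ)) ≤ (W:ℝ) := by rw [hKcast]; exact_mod_cast hle
  -- helper converting a real subset-sum equal to W into the integer statement
  have hreal2int : ∀ S : Finset (Fin m), (∑ i ∈ S, (w i : ℝ)) = (W : ℝ) →
      (∑ i ∈ S, w i) = W := by
    intro S hS
    have h1 : ((∑ i ∈ S, w i : ℤ) : ℝ) = ((W : ℤ) : ℝ) := by push_cast; rw [← hS]
    exact_mod_cast h1
  constructor
  · constructor
    · rintro ⟨S, hS⟩
      have hSint := hreal2int S hS
      have h1 : (∑ j ∈ Smax, w j) = W := le_antisymm hle (hSint ▸ hmax S (le_of_eq hSint))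
      have h2 : (∑ j ∈ Smax, (w j : ℝ)) = (W : ℝ) := by rw [hKcast]; exact_mod_cast h1
      rw [hfval, h2]
      field_simp
      ring
    · intro hf
      by_contra hno
      have hKne : (∑ j ∈ Smax, w j) ≠ W := by
        intro hEq
        exact hno ⟨Smax, by rw [hKcast]; exact_mod_cast hEq⟩
      have hKint : (∑ j ∈ Smax, w j) ≤ W - 1 := by omega
      have hKr : (∑ j ∈ Smax, (w j : ℝ)) ≤ (W:ℝ) - 1 := by
        rw [hKcast]
        have : ((∑ j ∈ Smax, w j : ℤ) : ℝ) ≤ ((W - 1 : ℤ) : ℝ) := by exact_mod_cast hKint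
        push_cast at this
        linarith
      rw [hfval] at hf
      set K := ∑ j ∈ Smax, (w j : ℝ) with hK_def
      have hdiff : (-Mval m w - K + eps / Mval m w * ((W:ℝ) + 2*eps - K - eps))
          - (-Mval m w - (W:ℝ) + eps^2 / Mval m w)
          = ((W:ℝ) - K) * (1 + eps / Mval m w) := by
        field_simp
        ring
      have hpos : 0 < ((W:ℝ) - K) * (1 + eps / Mval m w) :=
        mul_pos (by linarith) (by linarith)
      linarith [hf, hdiff, hpos]
  · intro hno V hV hVW hVmax
    have hKne : (∑ j ∈ Smax, w j) ≠ W := by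
      intro hEq
      exact hno ⟨Smax, by rw [hKcast]; exact_mod_cast hEq⟩
    have hKint : (∑ j ∈ Smax, w j) ≤ W - 1 := by omega
    have hKr : (∑ j ∈ Smax, (w j : ℝ)) ≤ (W:ℝ) - 1 := by
      rw [hKcast]
      have : ((∑ j ∈ Smax, w j : ℤ) : ℝ) ≤ ((W - 1 : ℤ) : ℝ) := by exact_mod_cast hKint
      push_cast at this
      linarith
    obtain ⟨SV, hSV⟩ := hV
    have hVcast : V = ((∑ i ∈ SV, w i : ℤ) : ℝ) := by rw [hSV]; push_cast; rfl
    have hVWi : (∑ i ∈ SV, w i) ≤ W := by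
      have : ((∑ i ∈ SV, w i : ℤ) : ℝ) < ((W : ℤ) : ℝ) := by rw [← hVcast]; exact_mod_cast hVW
      have h2 : (∑ i ∈ SV, w i) < W := by exact_mod_cast this
      omega
    have hVK : V ≤ ∑ j ∈ Smax, (w j : ℝ) := by
      rw [hVcast, hKcast]
      exact_mod_cast hmax SV hVWi
    have hKV : (∑ j ∈ Smax, (w j : ℝ)) ≤ V :=
      hVmax _ ⟨Smax, rfl⟩ (by linarith)
    have hEq : (∑ j ∈ Smax, (w j : ℝ)) = V := le_antisymm hKV hVK
    constructor
    · rw [hfval, hEq]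
    · rw [hfval]
      set K := ∑ j ∈ Smax, (w j : ℝ) with hK_def
      have hdiff : (-Mval m w - K + eps / Mval m w * ((W:ℝ) + 2*eps - K - eps))
          - (-Mval m w - (W:ℝ) + eps^2 / Mval m w)
          = ((W:ℝ) - K) * (1 + eps / Mval m w) := by
        field_simp
        ring
      have hpos : 0 < ((W:ℝ) - K) * (1 + eps / Mval m w) :=
        mul_pos (by linarith) (by linarith)
      linarith [hdiff, hpos]

end
end

section
/- Let m ∈ ℕ, w ∈ ℤ^m with w_i ≥ 1 for all i, W ∈ ℤ with 1 ≤ W ≤ Σ_{i=1}^m w_i − 1, and M := Σ_{i=1}^m w_i + 1. Let ĉ := ((2M−1)w_1, …, (2M−1)w_m, 2M²) ∈ ℝ^{m+1} and U := { c ∈ ℝ^{m+1} : c_i ≥ ĉ_i for all i, Σ_{i=1}^{m+1}(c_i − ĉ_i) ≤ W }. For c ∈ U define I_c := { i ∈ {1,…,m} : c_i/w_i ≥ c_{m+1}/M } and V_c := Σ_{i∈I_c} w_i. Then max_{c ∈ U} V_c exists and equals max{ Σ_{i∈S} w_i : S ⊆ {1,…,m}, Σ_{i∈S} w_i ≤ W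 }, the largest subset sum of {w_1,…,w_m} not exceeding W. -/
/-- Key claim of the simplicial-uncertainty reduction: with
`ĉ = ((2M−1)w₁, …, (2M−1)w_m, 2M²)` and
`U = { c : c ≥ ĉ, ∑ᵢ (cᵢ − ĉᵢ) ≤ W }`, the maximum of
`V_c = ∑_{i : cᵢ/wᵢ ≥ c_{m+1}/M} wᵢ` over `c ∈ U` exists and equals the
largest subset sum of `{w₁, …, w_m}` not exceeding `W`. -/
theorem simplicial_reduction_max_Vc
    (m : ℕ) (w : Fin m → ℤ) (W : ℤ) (hw : ∀ i, 1 ≤ w i)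
    (hW1 : 1 ≤ W) (hW2 : W ≤ (∑ i, w i) - 1) :
    let M : ℝ := (∑ i, (w i : ℝ)) + 1
    let chat : Fin (m + 1) → ℝ := fun i =>
      if h : (i : ℕ) < m then (2 * M - 1) * (w ⟨i, h⟩ : ℝ) else 2 * M ^ 2
    let U : Set (Fin (m + 1) → ℝ) :=
      {c | (∀ i, chat i ≤ c i) ∧ (∑ i, (c i - chat i)) ≤ (W : ℝ)}
    let Vc : (Fin (m + 1) → ℝ) → ℝ := fun c =>
      ∑ i : Fin m,
        if c (Fin.last m) / M ≤ c i.castSucc / (w i : ℝ) then (w i : ℝ) else 0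
    ∃ Vmax : ℝ,
      IsGreatest {V : ℝ | ∃ S : Finset (Fin m),
        V = ∑ i ∈ S, (w i : ℝ) ∧ V ≤ (W : ℝ)} Vmax ∧
      IsGreatest {v : ℝ | ∃ c ∈ U, v = Vc c} Vmax := by
  intro M chat U Vc
  have hwR : ∀ i, (1 : ℝ) ≤ (w i : ℝ) := fun i => by exact_mod_cast hw i
  have hwpos : ∀ i, (0 : ℝ) < (w i : ℝ) := fun i => lt_of_lt_of_le one_pos (hwR i)
  have hM : (0 : ℝ) < M := by
    have h0 : (0 : ℝ) ≤ ∑ i, (w i : ℝ) :=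
      Finset.sum_nonneg fun i _ => le_of_lt (hwpos i)
    simp only [M]; linarith
  have hchat_last : chat (Fin.last m) = 2 * M ^ 2 := by
    simp [chat]
  have hchat_cast : ∀ i : Fin m, chat i.castSucc = (2 * M - 1) * (w i : ℝ) := by
    intro i
    simp only [chat, Fin.coe_castSucc]
    rw [dif_pos i.isLt]
  -- the finite family of feasible subsets
  set F := Finset.univ.powerset.filter (fun S : Finset (Fin m) => ∑ i ∈ S, w i ≤ W)
    with hF
  have hmemF : ∀ S : Finset (Fin m), S ∈ F ↔ ∑ i ∈ S, w i ≤ W := by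
    intro S; simp [hF]
  have hne : F.Nonempty := ⟨∅, by rw [hmemF]; simp; linarith⟩
  obtain ⟨S₀, hS₀F, hS₀max⟩ := F.exists_max_image (fun S => ∑ i ∈ S, w i) hne
  have hS₀W : ∑ i ∈ S₀, w i ≤ W := (hmemF S₀).1 hS₀F
  refine ⟨∑ i ∈ S₀, (w i : ℝ), ?_, ?_⟩
  · constructor
    · exact ⟨S₀, rfl, by exact_mod_cast hS₀W⟩
    · rintro V ⟨S, rfl, hVW⟩
      have hSW : ∑ i ∈ S, w i ≤ W := by exact_mod_cast hVW
      have := hS₀max S ((hmemF S).2 hSW)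
      exact_mod_cast this
  · constructor
    · -- achievability
      set c : Fin (m + 1) → ℝ := fun j =>
        chat j + if h : (j : ℕ) < m then
          (if (⟨j, h⟩ : Fin m) ∈ S₀ then (w ⟨j, h⟩ : ℝ) else 0) else 0 with hc
      have hadd : ∀ j, 0 ≤ c j - chat j := by
        intro j
        simp only [hc, add_sub_cancel_left]
        split_ifs with h h2
        · exact (hwpos ⟨j, h⟩).le
        · exact le_refl 0
        · exact le_refl 0
      have hc_last : c (Fin.last m) = 2 * M ^ 2 := by
        simp only [hc]
        rw [dif_neg (by simp), add_zero, hchat_last]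
      have hc_cast : ∀ i : Fin m,
          c i.castSucc = (2 * M - 1) * (w i : ℝ) +
            (if i ∈ S₀ then (w i : ℝ) else 0) := by
        intro i
        simp only [hc, Fin.coe_castSucc]
        rw [dif_pos i.isLt, hchat_cast]
      refine ⟨c, ⟨fun j => by linarith [hadd j], ?_⟩, ?_⟩
      · -- budget constraint
        have hterm : ∀ i : Fin m, c i.castSucc - chat i.castSucc
            = (if i ∈ S₀ then (w i : ℝ) else 0) := by
          intro i
          rw [hc_cast i, hchat_cast i, add_sub_cancel_left]
        have : ∑ j, (c j - chat j) = ∑ i ∈ S₀, (w i : ℝ) := by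
          rw [Fin.sum_univ_castSucc]
          have h1 : c (Fin.last m) - chat (Fin.last m) = 0 := by
            rw [hc_last, hchat_last]; ring
          rw [h1, add_zero, Finset.sum_congr rfl (fun i _ => hterm i),
            Finset.sum_ite_mem, Finset.univ_inter]
        rw [this]
        exact_mod_cast hS₀W
      · -- value equals Vmax
        show (∑ i ∈ S₀, (w i : ℝ)) = Vc c
        have hterm : ∀ i : Fin m,
            (if c (Fin.last m) / M ≤ c i.castSucc / (w i : ℝ) then (w i : ℝ) else 0)
              = (if i ∈ S₀ then (w i : ℝ) else 0) := by
          intro i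
          by_cases hi : i ∈ S₀
          · rw [if_pos hi, if_pos]
            rw [hc_last, hc_cast i, if_pos hi, div_le_div_iff₀ hM (hwpos i)]
            nlinarith [hwpos i, hM]
          · rw [if_neg hi, if_neg]
            rw [hc_last, hc_cast i, if_neg hi, add_zero, div_le_div_iff₀ hM (hwpos i)]
            intro hcon
            nlinarith [hwpos i, hM]
        simp only [Vc]
        rw [Finset.sum_congr rfl (fun i _ => hterm i), Finset.sum_ite_mem,
          Finset.univ_inter]
    · -- upper bound
      rintro v ⟨c, ⟨hc1, hc2⟩, rfl⟩
      set S : Finset (Fin m) :=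
        Finset.univ.filter (fun i => c (Fin.last m) / M ≤ c i.castSucc / (w i : ℝ))
        with hS
      have hVcS : Vc c = ∑ i ∈ S, (w i : ℝ) := by
        simp only [Vc, hS, Finset.sum_filter]
      have hkey : ∀ i ∈ S, (w i : ℝ) ≤ c i.castSucc - chat i.castSucc := by
        intro i hi
        rw [hS, Finset.mem_filter] at hi
        have hcond := hi.2
        have hlast : 2 * M ^ 2 ≤ c (Fin.last m) := by
          have := hc1 (Fin.last m); rwa [hchat_last] at this
        have h1 : 2 * M ≤ c (Fin.last m) / M := by
          rw [le_div_iff₀ hM]; nlinarith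
        have h2 : 2 * M ≤ c i.castSucc / (w i : ℝ) := le_trans h1 hcond
        have h3 : 2 * M * (w i : ℝ) ≤ c i.castSucc := by
          rwa [le_div_iff₀ (hwpos i)] at h2
        rw [hchat_cast i]
        nlinarith [hwpos i]
      have hsum1 : ∑ i ∈ S, (w i : ℝ) ≤ ∑ i ∈ S, (c i.castSucc - chat i.castSucc) :=
        Finset.sum_le_sum hkey
      have hsum2 : ∑ i ∈ S, (c i.castSucc - chat i.castSucc) ≤
          ∑ i : Fin m, (c i.castSucc - chat i.castSucc) :=
        Finset.sum_le_sum_of_subset_of_nonneg (Finset.subset_univ S)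
          (fun i _ _ => by linarith [hc1 i.castSucc])
      have hsum3 : ∑ i : Fin m, (c i.castSucc - chat i.castSucc) ≤
          ∑ j, (c j - chat j) := by
        rw [Fin.sum_univ_castSucc]
        linarith [hc1 (Fin.last m)]
      have hSW : ∑ i ∈ S, (w i : ℝ) ≤ (W : ℝ) := by linarith
      have hSWZ : ∑ i ∈ S, w i ≤ W := by exact_mod_cast hSW
      have := hS₀max S ((hmemF S).2 hSWZ)
      rw [hVcS]
      exact_mod_cast this
end

section
/- Let m ∈ ℕ, a ∈ ℤ^m with a_i ≥ 1 for all i, and τ ∈ ℝ. For M ⊆ {1,…,m} let s_M := Σ_{i∈M} a_i and define f_{M,τ} : ℝ → ℝ by f_{M,τ}(b) := (1+τ)·min(b, s_M) + (τ−1)·max(b − s_M, 0), and set f_τ(b) := 2^{−m} Σ_{M ⊆ {1,…,m}} f_{M,τ}(b). Then for every integer b with 0 ≤ b < Σ_{i=1}^m a_i, f_τ(b+1) − f_τ(b) = 1 + τ − 2^{1−m} · #{ x ∈ {0,1}^m : a^T x ≤ b }. -/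
/-- Slope formula in the #Knapsack reduction: with
`f_{M,τ}(b) = (1+τ)·min(b, s_M) + (τ−1)·max(b − s_M, 0)` and
`f_τ = 2^{−m} ∑_M f_{M,τ}`, for every integer `0 ≤ b < ∑ aᵢ` one has
`f_τ(b+1) − f_τ(b) = 1 + τ − 2^{1−m} · #{x ∈ {0,1}^m : aᵀx ≤ b}`. -/
theorem stochastic_slope_counts_knapsack_solutions
    (m : ℕ) (a : Fin m → ℤ) (ha : ∀ i, 1 ≤ a i) (τ : ℝ) :
    let s : Finset (Fin m) → ℝ := fun M => ∑ i ∈ M, (a i : ℝ)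
    let f : Finset (Fin m) → ℝ → ℝ := fun M b =>
      (1 + τ) * min b (s M) + (τ - 1) * max (b - s M) 0
    let F : ℝ → ℝ := fun b => (∑ M : Finset (Fin m), f M b) / 2 ^ m
    ∀ b : ℤ, 0 ≤ b → b < ∑ i, a i →
      F ((b : ℝ) + 1) - F (b : ℝ) =
        1 + τ - (2 : ℝ) ^ (1 - (m : ℤ)) *
          ((Finset.univ.filter
            fun S : Finset (Fin m) => (∑ i ∈ S, a i) ≤ b).card : ℝ) := by
  intro s f F b hb0 hbu
  have hdiff : ∀ M : Finset (Fin m),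
      f M ((b : ℝ) + 1) - f M (b : ℝ) =
        if (∑ i ∈ M, a i) ≤ b then τ - 1 else 1 + τ := by
    intro M
    have hs : s M = ((∑ i ∈ M, a i : ℤ) : ℝ) := by simp [s]
    by_cases hM : (∑ i ∈ M, a i) ≤ b
    · have hsb : s M ≤ (b : ℝ) := by rw [hs]; exact_mod_cast hM
      rw [if_pos hM]
      have h1 : min ((b : ℝ) + 1) (s M) = s M := min_eq_right (by linarith)
      have h2 : min (b : ℝ) (s M) = s M := min_eq_right hsb
      have h3 : max ((b : ℝ) + 1 - s M) 0 = (b : ℝ) + 1 - s M :=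
        max_eq_left (by linarith)
      have h4 : max ((b : ℝ) - s M) 0 = (b : ℝ) - s M :=
        max_eq_left (by linarith)
      simp only [f, h1, h2, h3, h4]; ring
    · have hsb : (b : ℝ) + 1 ≤ s M := by
        rw [hs]
        have : b + 1 ≤ ∑ i ∈ M, a i := by omega
        exact_mod_cast this
      rw [if_neg hM]
      have h1 : min ((b : ℝ) + 1) (s M) = (b : ℝ) + 1 := min_eq_left hsb
      have h2 : min (b : ℝ) (s M) = (b : ℝ) := min_eq_left (by linarith)
      have h3 : max ((b : ℝ) + 1 - s M) 0 = 0 := max_eq_right (by linarith)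
      have h4 : max ((b : ℝ) - s M) 0 = 0 := max_eq_right (by linarith)
      simp only [f, h1, h2, h3, h4]; ring
  set k : ℕ := (Finset.univ.filter
      fun S : Finset (Fin m) => (∑ i ∈ S, a i) ≤ b).card with hk
  have hsum : ∑ M : Finset (Fin m), (f M ((b : ℝ) + 1) - f M (b : ℝ)) =
      (k : ℝ) * (τ - 1) + ((2 ^ m : ℝ) - k) * (1 + τ) := by
    rw [Finset.sum_congr rfl (fun M _ => hdiff M), Finset.sum_ite,
      Finset.sum_const, Finset.sum_const]
    have hcard : (Finset.univ.filter
        fun S : Finset (Fin m) => ¬ (∑ i ∈ S, a i) ≤ b).card = 2 ^ m - k := by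
      have := Finset.card_filter_add_card_filter_not
        (s := (Finset.univ : Finset (Finset (Fin m))))
        (p := fun S : Finset (Fin m) => (∑ i ∈ S, a i) ≤ b)
      simp only [Finset.card_univ, Fintype.card_finset, Fintype.card_fin] at this
      omega
    rw [hcard]
    have hkle : k ≤ 2 ^ m := by
      calc k ≤ (Finset.univ : Finset (Finset (Fin m))).card :=
            Finset.card_filter_le _ _
        _ = 2 ^ m := by simp
    simp only [nsmul_eq_mul, ← hk, Nat.cast_sub hkle]
    push_cast
    ring
  have hFd : F ((b : ℝ) + 1) - F (b : ℝ) =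
      (∑ M : Finset (Fin m), (f M ((b : ℝ) + 1) - f M (b : ℝ))) / 2 ^ m := by
    simp [F, Finset.sum_sub_distrib, sub_div]
  rw [hFd, hsum]
  have h2m : (2 : ℝ) ^ m ≠ 0 := by positivity
  have hz : (2 : ℝ) ^ (1 - (m : ℤ)) = 2 / 2 ^ m := by
    rw [zpow_sub₀ (by norm_num), zpow_one, zpow_natCast]
  rw [hz]
  field_simp
  ring
end

section
/- Let m ∈ ℕ, w ∈ ℤ^m with w_i ≥ 1 for all i, W ∈ ℤ with 1 ≤ W ≤ Σ_{i=1}^m w_i − 1, and M := Σ_{i=1}^m w_i + 1. Define n := m+1, a := (w_1, …, w_m, M), d := (−w_1, …, −w_m, M), ĉ := ((2M−1)w_1, …, (2M−1)w_m, 2M²), and U := { c ∈ ℝ^n : c ≥ ĉ componentwise, Σ_{i=1}^n (c_i − ĉ_i) ≤ W }. Let f(W) := inf over c ∈ U of min{ d^T x : x an optimal solution of (max c^T x s.t. a^T x ≤ W, 0 ≤ x ≤ 1), and x minimal in d^T x among those optimal solutions }. Then f(W) = −W if and only if there exists S ⊆ {1,…,m} with Σ_{i∈S} w_i = W; moreover,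 if no such S exists, then f(W) = W − 2V where V is the largest subset sum of {w_1,…,w_m} with V < W. -/
namespace AuxSS

lemma sum_update_mul {n : ℕ} (c x : Fin n → ℝ) (i : Fin n) (b : ℝ) :
    ∑ j, c j * Function.update x i b j = (∑ j, c j * x j) + c i * (b - x i) := by
  have h : ∀ j, c j * Function.update x i b j
      = Function.update (fun j => c j * x j) i (c i * b) j := by
    intro j
    rcases eq_or_ne j i with rfl | hj
    · simp
    · simp [Function.update_of_ne hj]
  rw [Finset.sum_congr rfl (fun j _ => h j),
    Finset.sum_update_of_mem (Finset.mem_univ i),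
    Finset.sum_eq_sum_sdiff_singleton_add (Finset.mem_univ i) (fun j => c j * x j)]
  ring

variable (m : ℕ) (w : Fin m → ℤ) (W : ℤ)

noncomputable def Mv : ℝ := (∑ i, (w i : ℝ)) + 1

noncomputable def av : Fin (m + 1) → ℝ := fun i =>
  if h : (i : ℕ) < m then (w ⟨i, h⟩ : ℝ) else Mv m w

noncomputable def dv : Fin (m + 1) → ℝ := fun i =>
  if h : (i : ℕ) < m then -(w ⟨i, h⟩ : ℝ) else Mv m w

noncomputable def cv : Fin (m + 1) → ℝ := fun i =>
  if h : (i : ℕ) < m then (2 * Mv m w - 1) * (w ⟨i, h⟩ : ℝ) else 2 * Mv m w ^ 2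

def Uv : Set (Fin (m + 1) → ℝ) :=
  {c | (∀ i, cv m w i ≤ c i) ∧ (∑ i, (c i - cv m w i)) ≤ (W : ℝ)}

variable {m w W}

lemma av_cs (i : Fin m) : av m w i.castSucc = (w i : ℝ) := by simp [av]
lemma av_last : av m w (Fin.last m) = Mv m w := by simp [av]
lemma dv_cs (i : Fin m) : dv m w i.castSucc = -(w i : ℝ) := by simp [dv]
lemma dv_last : dv m w (Fin.last m) = Mv m w := by simp [dv]
lemma cv_cs (i : Fin m) : cv m w i.castSucc = (2 * Mv m w - 1) * (w i : ℝ) := by simp [cv]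
lemma cv_last : cv m w (Fin.last m) = 2 * Mv m w ^ 2 := by simp [cv]

section facts
variable (hw : ∀ i, 1 ≤ w i) (hW1 : 1 ≤ W) (hW2 : W ≤ (∑ i, w i) - 1)
include hw

lemma wR (i : Fin m) : (1 : ℝ) ≤ (w i : ℝ) := by exact_mod_cast hw i

lemma sum_w_nonneg : 0 ≤ ∑ i, (w i : ℝ) :=
  Finset.sum_nonneg fun i _ => le_trans zero_le_one (wR hw i)

lemma Mv_pos : 0 < Mv m w := by
  have := sum_w_nonneg (w := w) hw; unfold Mv; linarith

omit hw in
include hW2 in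
lemma W_add_two_le_M : (W : ℝ) + 2 ≤ Mv m w := by
  have h : (W : ℝ) ≤ (∑ i, (w i : ℝ)) - 1 := by exact_mod_cast hW2
  unfold Mv; linarith

lemma av_nonneg (j : Fin (m + 1)) : 0 ≤ av m w j := by
  unfold av; split
  · have := wR hw (⟨j, by assumption⟩ : Fin m); linarith
  · exact le_of_lt (Mv_pos hw)

omit hw in
include hW1 in
lemma WR_pos : (1 : ℝ) ≤ (W : ℝ) := by exact_mod_cast hW1

omit hw in
lemma split_sum (g x : Fin (m + 1) → ℝ) :
    ∑ j, g j * x j = (∑ i : Fin m, g i.castSucc * x i.castSucc) +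
      g (Fin.last m) * x (Fin.last m) := Fin.sum_univ_castSucc _

lemma feas_lb {x : Fin (m + 1) → ℝ} (hx : feasibleKP (av m w) (W : ℝ) x) :
    -(W : ℝ) ≤ ∑ j, dv m w j * x j := by
  have h1 : ∀ j, -(av m w j * x j) ≤ dv m w j * x j := by
    intro j
    have hd : -(av m w j) ≤ dv m w j := by
      by_cases h : (j : ℕ) < m
      · simp [av, dv, h]
      · simp only [av, dv, dif_neg h]
        have := Mv_pos hw; linarith
    have := mul_le_mul_of_nonneg_right hd (hx.2 j).1
    nlinarith [this]
  have h2 : ∑ j, -(av m w j * x j) ≤ ∑ j, dv m w j * x j :=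
    Finset.sum_le_sum fun j _ => h1 j
  rw [Finset.sum_neg_distrib] at h2
  linarith [hx.1]

include hW1 hW2 in
lemma core {c x : Fin (m + 1) → ℝ} (hc : c ∈ Uv m w W)
    (hx : optimalKP (av m w) c (W : ℝ) x) :
    (∑ j, av m w j * x j) = (W : ℝ) ∧
      ∀ i : Fin m, 0 < x i.castSucc →
        (w i : ℝ) ≤ c i.castSucc - cv m w i.castSucc := by
  obtain ⟨⟨hfeas, hbox⟩, hopt⟩ := hx
  have hMpos : 0 < Mv m w := Mv_pos hw
  have hWM : (W : ℝ) + 2 ≤ Mv m w := W_add_two_le_M hW2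
  have hW0 : (1 : ℝ) ≤ (W : ℝ) := WR_pos hW1
  have hwterm : ∀ i : Fin m, 0 ≤ (w i : ℝ) * x i.castSucc := fun i =>
    mul_nonneg (by linarith [wR hw i]) (hbox i.castSucc).1
  have hsplit_a : ∑ j, av m w j * x j =
      (∑ i : Fin m, (w i : ℝ) * x i.castSucc) + Mv m w * x (Fin.last m) := by
    rw [split_sum, av_last]
    congr 1
    exact Finset.sum_congr rfl fun i _ => by rw [av_cs]
  have hsw_nonneg : 0 ≤ ∑ i : Fin m, (w i : ℝ) * x i.castSucc :=
    Finset.sum_nonneg fun i _ => hwterm i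
  have hMx : Mv m w * x (Fin.last m) ≤ (W : ℝ) := by
    rw [hsplit_a] at hfeas; linarith
  have hxl_lt : x (Fin.last m) < 1 := by
    by_contra hcon
    push_neg at hcon
    nlinarith [mul_le_mul_of_nonneg_left hcon (le_of_lt hMpos)]
  have hc_last : 2 * Mv m w ^ 2 ≤ c (Fin.last m) := by
    have := hc.1 (Fin.last m); rwa [cv_last] at this
  have hc_last_pos : 0 < c (Fin.last m) := by nlinarith
  -- full capacity
  have hcap : ∑ j, av m w j * x j = (W : ℝ) := by
    by_contra hne
    have hlt : ∑ j, av m w j * x j < (W : ℝ) := lt_of_le_of_ne hfeas hne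
    set s : ℝ := ∑ j, av m w j * x j with hs
    set ε : ℝ := min (((W : ℝ) - s) / Mv m w) (1 - x (Fin.last m)) with hεdef
    have hεpos : 0 < ε :=
      lt_min (div_pos (by linarith) hMpos) (by linarith)
    set y := Function.update x (Fin.last m) (x (Fin.last m) + ε) with hy
    have hay : ∑ j, av m w j * y j = s + Mv m w * ε := by
      rw [hy, sum_update_mul, av_last]; ring
    have hfy : feasibleKP (av m w) (W : ℝ) y := by
      constructor
      · rw [hay]
        have h1 : ε ≤ ((W : ℝ) - s) / Mv m w := min_le_left _ _
        rw [le_div_iff₀ hMpos] at h1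
        nlinarith
      · intro j
        rcases eq_or_ne j (Fin.last m) with rfl | hj
        · rw [hy, Function.update_self]
          have h2 : ε ≤ 1 - x (Fin.last m) := min_le_right _ _
          constructor
          · linarith [(hbox (Fin.last m)).1]
          · linarith
        · rw [hy, Function.update_of_ne hj]; exact hbox j
    have := hopt y hfy
    rw [hy, sum_update_mul] at this
    nlinarith
  refine ⟨hcap, ?_⟩
  intro i hxi
  have hne : i.castSucc ≠ Fin.last m := (Fin.castSucc_lt_last i).ne
  have hwi : (1 : ℝ) ≤ (w i : ℝ) := wR hw i
  have hwipos : (0 : ℝ) < (w i : ℝ) := by linarith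
  set ε : ℝ := min ((w i : ℝ) * x i.castSucc) (Mv m w * (1 - x (Fin.last m)))
    with hεdef
  have hεpos : 0 < ε :=
    lt_min (mul_pos hwipos hxi) (mul_pos hMpos (by linarith))
  set y := Function.update (Function.update x i.castSucc
      (x i.castSucc - ε / (w i : ℝ))) (Fin.last m)
      (x (Fin.last m) + ε / Mv m w) with hy
  have hull : (Function.update x i.castSucc (x i.castSucc - ε / (w i : ℝ)))
      (Fin.last m) = x (Fin.last m) := Function.update_of_ne hne.symm _ _
  have hsumy : ∀ g : Fin (m + 1) → ℝ, ∑ j, g j * y j =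
      (∑ j, g j * x j) - g i.castSucc * (ε / (w i : ℝ))
        + g (Fin.last m) * (ε / Mv m w) := by
    intro g
    rw [hy, sum_update_mul, sum_update_mul, hull]; ring
  have hay : ∑ j, av m w j * y j = ∑ j, av m w j * x j := by
    rw [hsumy, av_cs, av_last]
    field_simp
    ring
  have hfy : feasibleKP (av m w) (W : ℝ) y := by
    constructor
    · rw [hay, hcap]
    · intro j
      rcases eq_or_ne j (Fin.last m) with rfl | hjl
      · rw [hy, Function.update_self]
        have h2 : ε ≤ Mv m w * (1 - x (Fin.last m)) := min_le_right _ _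
        rw [← div_le_iff₀' hMpos] at h2
        constructor
        · have : 0 ≤ ε / Mv m w := le_of_lt (div_pos hεpos hMpos)
          linarith [(hbox (Fin.last m)).1]
        · linarith
      · rw [hy, Function.update_of_ne hjl]
        rcases eq_or_ne j i.castSucc with rfl | hji
        · rw [Function.update_self]
          have h1 : ε ≤ (w i : ℝ) * x i.castSucc := min_le_left _ _
          rw [← div_le_iff₀' hwipos] at h1
          have hεw : 0 < ε / (w i : ℝ) := div_pos hεpos hwipos
          constructor
          · linarith
          · linarith [(hbox i.castSucc).2]
        · rw [Function.update_of_ne hji]; exact hbox j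
  have hkey := hopt y hfy
  rw [hsumy c] at hkey
  have h1 : c (Fin.last m) * (ε / Mv m w) ≤ c i.castSucc * (ε / (w i : ℝ)) := by
    linarith
  have h2 : 2 * Mv m w * ε ≤ c (Fin.last m) * (ε / Mv m w) := by
    have ha : 2 * Mv m w ^ 2 * (ε / Mv m w) ≤ c (Fin.last m) * (ε / Mv m w) :=
      mul_le_mul_of_nonneg_right hc_last (le_of_lt (div_pos hεpos hMpos))
    have hb : 2 * Mv m w ^ 2 * (ε / Mv m w) = 2 * Mv m w * ε := by
      field_simp
    linarith
  have h3 : 2 * Mv m w * ε ≤ (c i.castSucc / (w i : ℝ)) * ε := by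
    have : c i.castSucc * (ε / (w i : ℝ)) = (c i.castSucc / (w i : ℝ)) * ε := by
      ring
    linarith
  have h4 : 2 * Mv m w ≤ c i.castSucc / (w i : ℝ) :=
    le_of_mul_le_mul_right (by linarith) hεpos
  rw [le_div_iff₀ hwipos] at h4
  rw [cv_cs]
  nlinarith

include hW1 hW2 in
lemma dbound
    (hns : ¬ ∃ S : Finset (Fin m), (∑ i ∈ S, (w i : ℝ)) = (W : ℝ))
    {V : ℝ} (hVmax : ∀ V' : ℝ, (∃ S : Finset (Fin m), V' = ∑ i ∈ S, (w i : ℝ)) →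
      V' < (W : ℝ) → V' ≤ V)
    {c x : Fin (m + 1) → ℝ} (hc : c ∈ Uv m w W)
    (hx : optimalKP (av m w) c (W : ℝ) x) :
    (W : ℝ) - 2 * V ≤ ∑ j, dv m w j * x j := by
  obtain ⟨hcap, hkey⟩ := core hw hW1 hW2 hc hx
  set S : Finset (Fin m) := Finset.univ.filter (fun i => 0 < x i.castSucc) with hS
  have hδ : ∀ j, 0 ≤ c j - cv m w j := fun j => sub_nonneg.2 (hc.1 j)
  have h1 : ∑ i ∈ S, (w i : ℝ) ≤ ∑ i ∈ S, (c i.castSucc - cv m w i.castSucc) :=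
    Finset.sum_le_sum fun i hi => hkey i (by simpa [hS] using hi)
  have h2 : ∑ i ∈ S, (c i.castSucc - cv m w i.castSucc) ≤
      ∑ i : Fin m, (c i.castSucc - cv m w i.castSucc) :=
    Finset.sum_le_sum_of_subset_of_nonneg (Finset.filter_subset _ _)
      (fun i _ _ => hδ _)
  have h3 : (∑ i : Fin m, (c i.castSucc - cv m w i.castSucc)) ≤
      ∑ j, (c j - cv m w j) := by
    rw [Fin.sum_univ_castSucc (f := fun j => c j - cv m w j)]
    linarith [hδ (Fin.last m)]
  have hSle : ∑ i ∈ S, (w i : ℝ) ≤ (W : ℝ) :=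
    le_trans h1 (le_trans h2 (le_trans h3 hc.2))
  have hSne : ∑ i ∈ S, (w i : ℝ) ≠ (W : ℝ) := fun h => hns ⟨S, h⟩
  have hSV : ∑ i ∈ S, (w i : ℝ) ≤ V :=
    hVmax _ ⟨S, rfl⟩ (lt_of_le_of_ne hSle hSne)
  have hx0 : ∀ i : Fin m, i ∉ S → x i.castSucc = 0 := by
    intro i hi
    have h1 : ¬ 0 < x i.castSucc := by simpa [hS] using hi
    exact le_antisymm (not_lt.1 h1) ((hx.1.2 _).1)
  have h4 : ∑ i : Fin m, (w i : ℝ) * x i.castSucc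
      = ∑ i ∈ S, (w i : ℝ) * x i.castSucc :=
    (Finset.sum_subset (Finset.subset_univ S)
      (fun i _ hi => by rw [hx0 i hi, mul_zero])).symm
  have h5 : ∑ i ∈ S, (w i : ℝ) * x i.castSucc ≤ ∑ i ∈ S, (w i : ℝ) :=
    Finset.sum_le_sum fun i _ => by
      nlinarith [(hx.1.2 i.castSucc).2, wR hw i, (hx.1.2 i.castSucc).1]
  have hwx : ∑ i : Fin m, (w i : ℝ) * x i.castSucc ≤ V := by
    rw [h4]; linarith
  have hsd : ∑ j, dv m w j * x j =
      -(∑ i : Fin m, (w i : ℝ) * x i.castSucc) + Mv m w * x (Fin.last m) := by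
    rw [split_sum, dv_last]
    have : ∑ i : Fin m, dv m w i.castSucc * x i.castSucc
        = ∑ i : Fin m, -((w i : ℝ) * x i.castSucc) :=
      Finset.sum_congr rfl fun i _ => by rw [dv_cs]; ring
    rw [this, Finset.sum_neg_distrib]
  have hsa : (∑ i : Fin m, (w i : ℝ) * x i.castSucc) +
      Mv m w * x (Fin.last m) = (W : ℝ) := by
    rw [← hcap, split_sum, av_last]
    congr 1
    exact Finset.sum_congr rfl fun i _ => by rw [av_cs]
  rw [hsd]
  linarith

end facts
section construct
variable (m w W)

noncomputable def cS (S : Finset (Fin m)) : Fin (m + 1) → ℝ := fun j =>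
  cv m w j + (if h : (j : ℕ) < m then (if ⟨j, h⟩ ∈ S then (w ⟨j, h⟩ : ℝ) else 0) else 0)

noncomputable def xS (S : Finset (Fin m)) : Fin (m + 1) → ℝ := fun j =>
  if h : (j : ℕ) < m then (if ⟨j, h⟩ ∈ S then 1 else 0)
  else ((W : ℝ) - ∑ i ∈ S, (w i : ℝ)) / Mv m w

variable {m w W}

lemma cS_cs (S : Finset (Fin m)) (i : Fin m) :
    cS m w S i.castSucc = cv m w i.castSucc + (if i ∈ S then (w i : ℝ) else 0) := by
  simp [cS]

lemma cS_last (S : Finset (Fin m)) :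
    cS m w S (Fin.last m) = cv m w (Fin.last m) := by simp [cS]

lemma xS_cs (S : Finset (Fin m)) (i : Fin m) :
    xS m w W S i.castSucc = (if i ∈ S then (1 : ℝ) else 0) := by simp [xS]

lemma xS_last (S : Finset (Fin m)) :
    xS m w W S (Fin.last m) = ((W : ℝ) - ∑ i ∈ S, (w i : ℝ)) / Mv m w := by
  simp [xS]

variable (hw : ∀ i, 1 ≤ w i) (hW1 : 1 ≤ W) (hW2 : W ≤ (∑ i, w i) - 1)
include hw hW1 hW2

lemma construct (S : Finset (Fin m)) (hK : (∑ i ∈ S, (w i : ℝ)) ≤ (W : ℝ)) :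
    cS m w S ∈ Uv m w W ∧
      optimalKP (av m w) (cS m w S) (W : ℝ) (xS m w W S) ∧
      (∑ j, dv m w j * xS m w W S j) = (W : ℝ) - 2 * (∑ i ∈ S, (w i : ℝ)) := by
  have hMpos : 0 < Mv m w := Mv_pos hw
  have hWM : (W : ℝ) + 2 ≤ Mv m w := W_add_two_le_M hW2
  have hW0 : (1 : ℝ) ≤ (W : ℝ) := WR_pos hW1
  set K : ℝ := ∑ i ∈ S, (w i : ℝ) with hKdef
  have hK0 : 0 ≤ K :=
    Finset.sum_nonneg fun i _ => by linarith [wR hw i]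
  -- sum of the bumps
  have hbump : ∑ j, (cS m w S j - cv m w j) = K := by
    have h1 : ∀ i : Fin m, cS m w S i.castSucc - cv m w i.castSucc
        = (if i ∈ S then (w i : ℝ) else 0) := fun i => by rw [cS_cs]; ring
    rw [Fin.sum_univ_castSucc (f := fun j => cS m w S j - cv m w j)]
    rw [Finset.sum_congr rfl (fun i _ => h1 i), cS_last]
    simp [hKdef, Finset.sum_ite_mem]
  have hcU : cS m w S ∈ Uv m w W := by
    constructor
    · intro j
      have hb : 0 ≤ (if h : (j : ℕ) < m then
          (if ⟨j, h⟩ ∈ S then (w ⟨j, h⟩ : ℝ) else 0) else 0) := by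
        split
        · rename_i h
          split
          · linarith [wR hw ⟨j, h⟩]
          · exact le_refl _
        · exact le_refl _
      show cv m w j ≤ cS m w S j
      unfold cS
      linarith
    · rw [hbump]; exact hK
  have hMne : Mv m w ≠ 0 := ne_of_gt hMpos
  have hxbox : ∀ j, 0 ≤ xS m w W S j ∧ xS m w W S j ≤ 1 := by
    intro j
    induction j using Fin.lastCases with
    | last =>
      rw [xS_last]
      constructor
      · exact div_nonneg (by linarith) hMpos.le
      · rw [div_le_one hMpos]; linarith
    | cast i =>
      rw [xS_cs]
      split
      · exact ⟨zero_le_one, le_refl 1⟩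
      · exact ⟨le_refl 0, zero_le_one⟩
  have hsum_ax : ∑ j, av m w j * xS m w W S j = (W : ℝ) := by
    rw [split_sum, av_last, xS_last]
    have h1 : ∀ i : Fin m, av m w i.castSucc * xS m w W S i.castSucc
        = (if i ∈ S then (w i : ℝ) else 0) := by
      intro i; rw [av_cs, xS_cs]; split <;> ring
    rw [Finset.sum_congr rfl fun i _ => h1 i, Finset.sum_ite_mem,
      Finset.univ_inter, ← hKdef, mul_div_cancel₀ _ hMne]
    ring
  have hfx : feasibleKP (av m w) (W : ℝ) (xS m w W S) := ⟨le_of_eq hsum_ax, hxbox⟩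
  have hub : ∀ j, cS m w S j ≤ 2 * Mv m w * av m w j := by
    intro j
    induction j using Fin.lastCases with
    | last =>
      rw [cS_last, cv_last, av_last]; nlinarith
    | cast i =>
      rw [cS_cs, cv_cs, av_cs]
      have := wR hw i
      split <;> nlinarith
  have hvalx : ∑ j, cS m w S j * xS m w W S j = 2 * Mv m w * (W : ℝ) := by
    rw [split_sum, cS_last, cv_last, xS_last]
    have h1 : ∀ i : Fin m, cS m w S i.castSucc * xS m w W S i.castSucc
        = (if i ∈ S then 2 * Mv m w * (w i : ℝ) else 0) := by
      intro i; rw [cS_cs, cv_cs, xS_cs]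
      split <;> ring
    rw [Finset.sum_congr rfl fun i _ => h1 i, Finset.sum_ite_mem,
      Finset.univ_inter, ← Finset.mul_sum, ← hKdef]
    have h2 : 2 * Mv m w ^ 2 * (((W : ℝ) - K) / Mv m w)
        = 2 * Mv m w * ((W : ℝ) - K) := by
      field_simp
    rw [h2]; ring
  have hoptx : optimalKP (av m w) (cS m w S) (W : ℝ) (xS m w W S) := by
    refine ⟨hfx, fun y hy => ?_⟩
    have h1 : ∑ j, cS m w S j * y j ≤ ∑ j, 2 * Mv m w * (av m w j * y j) := by
      refine Finset.sum_le_sum fun j _ => ?_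
      have := mul_le_mul_of_nonneg_right (hub j) (hy.2 j).1
      nlinarith [this]
    have h2 : ∑ j, 2 * Mv m w * (av m w j * y j)
        = 2 * Mv m w * ∑ j, av m w j * y j := by rw [Finset.mul_sum]
    have h3 : 2 * Mv m w * (∑ j, av m w j * y j) ≤ 2 * Mv m w * (W : ℝ) :=
      mul_le_mul_of_nonneg_left hy.1 (by nlinarith)
    rw [hvalx]
    linarith
  refine ⟨hcU, hoptx, ?_⟩
  rw [split_sum, dv_last, xS_last]
  have h1 : ∀ i : Fin m, dv m w i.castSucc * xS m w W S i.castSucc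
      = (if i ∈ S then -(w i : ℝ) else 0) := by
    intro i; rw [dv_cs, xS_cs]; split <;> ring
  rw [Finset.sum_congr rfl fun i _ => h1 i, Finset.sum_ite_mem,
    Finset.univ_inter, mul_div_cancel₀ _ hMne]
  rw [Finset.sum_neg_distrib, ← hKdef]
  ring
end construct

section final
variable (m w W)

noncomputable def VSet : Set ℝ :=
  {v : ℝ | ∃ c ∈ Uv m w W, ∃ x : Fin (m + 1) → ℝ,
    optimalKP (av m w) c (W : ℝ) x ∧
    (∀ x' : Fin (m + 1) → ℝ, optimalKP (av m w) c (W : ℝ) x' →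
      ∑ i, dv m w i * x i ≤ ∑ i, dv m w i * x' i) ∧
    v = ∑ i, dv m w i * x i}

variable {m w W}
variable (hw : ∀ i, 1 ≤ w i) (hW1 : 1 ≤ W) (hW2 : W ≤ (∑ i, w i) - 1)
include hw hW1 hW2

omit hW1 hW2 in
lemma VSet_lb : ∀ v ∈ VSet m w W, -(W : ℝ) ≤ v := by
  rintro v ⟨c, hcU, x, hx, hmin, rfl⟩
  exact feas_lb hw hx.1

lemma sInf_VSet_subset_sum (S : Finset (Fin m))
    (hS : (∑ i ∈ S, (w i : ℝ)) = (W : ℝ)) :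
    sInf (VSet m w W) = -(W : ℝ) := by
  obtain ⟨hcU, hopt, hval⟩ := construct hw hW1 hW2 S (le_of_eq hS)
  rw [hS] at hval
  have hmem : -(W : ℝ) ∈ VSet m w W := by
    refine ⟨cS m w S, hcU, xS m w W S, hopt, fun x' hx' => ?_, ?_⟩
    · rw [hval]
      have := feas_lb hw hx'.1
      linarith
    · rw [hval]; ring
  exact le_antisymm (csInf_le ⟨-(W : ℝ), VSet_lb hw⟩ hmem)
    (le_csInf ⟨_, hmem⟩ (VSet_lb hw))

lemma sInf_VSet_no_subset_sum
    (hns : ¬ ∃ S : Finset (Fin m), (∑ i ∈ S, (w i : ℝ)) = (W : ℝ))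
    {V : ℝ} (hVss : ∃ S : Finset (Fin m), V = ∑ i ∈ S, (w i : ℝ))
    (hVlt : V < (W : ℝ))
    (hVmax : ∀ V' : ℝ, (∃ S : Finset (Fin m), V' = ∑ i ∈ S, (w i : ℝ)) →
      V' < (W : ℝ) → V' ≤ V) :
    sInf (VSet m w W) = (W : ℝ) - 2 * V := by
  obtain ⟨S0, hS0⟩ := hVss
  obtain ⟨hcU, hopt, hval⟩ := construct hw hW1 hW2 S0
    (by rw [← hS0]; exact hVlt.le)
  rw [← hS0] at hval
  have hmem : (W : ℝ) - 2 * V ∈ VSet m w W := by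
    refine ⟨cS m w S0, hcU, xS m w W S0, hopt, fun x' hx' => ?_, hval.symm⟩
    rw [hval]
    exact dbound hw hW1 hW2 hns hVmax hcU hx'
  have hlb : ∀ v ∈ VSet m w W, (W : ℝ) - 2 * V ≤ v := by
    rintro v ⟨c, hcU', x, hx, hmin, rfl⟩
    exact dbound hw hW1 hW2 hns hVmax hcU' hx
  exact le_antisymm (csInf_le ⟨(W : ℝ) - 2 * V, hlb⟩ hmem)
    (le_csInf ⟨_, hmem⟩ hlb)

omit hw hW2 in
lemma exists_maximal_below :
    ∃ V : ℝ, (∃ S : Finset (Fin m), V = ∑ i ∈ S, (w i : ℝ)) ∧ V < (W : ℝ) ∧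
      (∀ V' : ℝ, (∃ S : Finset (Fin m), V' = ∑ i ∈ S, (w i : ℝ)) →
        V' < (W : ℝ) → V' ≤ V) := by
  classical
  have hW0 : (1 : ℝ) ≤ (W : ℝ) := WR_pos hW1
  set T : Finset ℝ := (Finset.univ.powerset.image
    (fun S : Finset (Fin m) => ∑ i ∈ S, (w i : ℝ))).filter
      (fun v => v < (W : ℝ))
  have hT0 : (0 : ℝ) ∈ T :=
    Finset.mem_filter.2 ⟨Finset.mem_image.2 ⟨∅, by simp, by simp⟩, by
      show (0:ℝ) < (W:ℝ); linarith⟩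
  have hTne : T.Nonempty := ⟨0, hT0⟩
  have hmem := T.max'_mem hTne
  have h1 := (Finset.mem_filter.1 hmem).1
  have h2 := (Finset.mem_filter.1 hmem).2
  obtain ⟨S, _, hS⟩ := Finset.mem_image.1 h1
  refine ⟨T.max' hTne, ⟨S, hS.symm⟩, by simpa using h2, ?_⟩
  rintro V' ⟨S', hS'⟩ hlt
  exact T.le_max' V' (Finset.mem_filter.2
    ⟨Finset.mem_image.2 ⟨S', by simp, hS'.symm⟩, hlt⟩)

end final

end AuxSS

/-- Evaluating the leader's objective of the simplicial-uncertainty reduction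
instance at the single capacity `b = W` decides the subset sum instance:
`f(W) = −W` iff `W` is a subset sum of `{w₁, …, w_m}`; and if `W` is not a
subset sum, then `f(W) = W − 2V` with `V` the largest subset sum below `W`. -/
theorem simplicial_evaluation_decides_subset_sum
    (m : ℕ) (w : Fin m → ℤ) (W : ℤ) (hw : ∀ i, 1 ≤ w i)
    (hW1 : 1 ≤ W) (hW2 : W ≤ (∑ i, w i) - 1) :
    let M : ℝ := (∑ i, (w i : ℝ)) + 1
    let a : Fin (m + 1) → ℝ := fun i =>
      if h : (i : ℕ) < m then (w ⟨i, h⟩ : ℝ) else M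
    let d : Fin (m + 1) → ℝ := fun i =>
      if h : (i : ℕ) < m then -(w ⟨i, h⟩ : ℝ) else M
    let chat : Fin (m + 1) → ℝ := fun i =>
      if h : (i : ℕ) < m then (2 * M - 1) * (w ⟨i, h⟩ : ℝ) else 2 * M ^ 2
    let U : Set (Fin (m + 1) → ℝ) :=
      {c | (∀ i, chat i ≤ c i) ∧ (∑ i, (c i - chat i)) ≤ (W : ℝ)}
    let fW : ℝ := sInf {v : ℝ | ∃ c ∈ U, ∃ x : Fin (m + 1) → ℝ,
      optimalKP a c (W : ℝ) x ∧
      (∀ x' : Fin (m + 1) → ℝ, optimalKP a c (W : ℝ) x' →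
        ∑ i, d i * x i ≤ ∑ i, d i * x' i) ∧
      v = ∑ i, d i * x i}
    (fW = -(W : ℝ) ↔ ∃ S : Finset (Fin m), (∑ i ∈ S, (w i : ℝ)) = (W : ℝ)) ∧
    (¬ (∃ S : Finset (Fin m), (∑ i ∈ S, (w i : ℝ)) = (W : ℝ)) →
      ∀ V : ℝ, (∃ S : Finset (Fin m), V = ∑ i ∈ S, (w i : ℝ)) → V < (W : ℝ) →
        (∀ V' : ℝ, (∃ S : Finset (Fin m), V' = ∑ i ∈ S, (w i : ℝ)) →
          V' < (W : ℝ) → V' ≤ V) →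
        fW = (W : ℝ) - 2 * V) := by
  intro M a d chat U fW
  have hfW : fW = sInf (AuxSS.VSet m w W) := rfl
  constructor
  · constructor
    · intro h
      by_contra hns'
      obtain ⟨V, hVss, hVlt, hVmax⟩ := AuxSS.exists_maximal_below (w := w) hW1
      have h2 := AuxSS.sInf_VSet_no_subset_sum hw hW1 hW2 hns' hVss hVlt hVmax
      rw [hfW, h2] at h
      linarith
    · rintro ⟨S, hS⟩
      rw [hfW]
      exact AuxSS.sInf_VSet_subset_sum hw hW1 hW2 S hS
  · intro hns V hVss hVlt hVmax
    rw [hfW]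
    exact AuxSS.sInf_VSet_no_subset_sum hw hW1 hW2 hns hVss hVlt hVmax
end
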